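/- arXiv:1511.04482 — 14 statements merged into one kernel-verified Lean document; each statement's English description precedes it below -/
import Mathlib

section
/- Let (a,b,x) and (a',b',x') be coin types with a < b, a' < b', x > 0, x' > 0, and with (a,b,x) lexicographically smaller than (a',b',x'). Then the coin (a,b,x) dominates the coin (a',b',x') if and only if exactly one of the following four conditions is satisfied: (1) a = a' < b < b' and 1/x' > 1/x + 1; (2) a < a' < b' < b and x > 1; (3) a < a' < b = b' and x > x' + 1; (4) a < a' < b < b' and (1/x + 1)(x' + 1) < 2. -/
open Finset

/-- The probability that coin `(a,b,x)` displays a strictly larger number than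
coin `(a',b',x')`, when both are flipped independently. -/
noncomputable def winProb (a b x a' b' x' : ℝ) : ℝ :=
  (1 / (1 + x)) * (1 / (1 + x')) * (if a' < a then 1 else 0)
  + (1 / (1 + x)) * (x' / (1 + x')) * (if b' < a then 1 else 0)
  + (x / (1 + x)) * (1 / (1 + x')) * (if a' < b then 1 else 0)
  + (x / (1 + x)) * (x' / (1 + x')) * (if b' < b then 1 else 0)

/-- Coin `(a,b,x)` dominates coin `(a',b',x')`: it is more likely to display the
strictly larger number. -/
def Dominates (a b x a' b' x' : ℝ) : Prop :=
  winProb a' b' x' a b x < winProb a b x a' b' x'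

/-- A tournament: irreflexive, and for distinct vertices exactly one of the two
directed edges is present. -/
def IsTournament {V : Type*} (R : V → V → Prop) : Prop :=
  (∀ v, ¬ R v v) ∧ ∀ u v : V, u ≠ v → (R u v ↔ ¬ R v u)

/-- A directed cycle `c 0 → c 1 → ⋯ → c (m-1) → c 0` in the digraph `R`:
the vertices are distinct and consecutive ones (cyclically) are joined by edges. -/
def IsCycle {V : Type*} (R : V → V → Prop) {m : ℕ} (c : Fin (m + 1) → V) : Prop :=
  Function.Injective c ∧ ∀ i : Fin (m + 1), R (c i) (c (i + 1))

/-- A cycle on linearly ordered vertices is ascending if it has at least as many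
ascents as descents. -/
def IsAscendingCycle {α : Type*} [LinearOrder α] {m : ℕ} (c : Fin (m + 1) → α) : Prop :=
  (univ.filter (fun i : Fin (m + 1) => c (i + 1) < c i)).card ≤
    (univ.filter (fun i : Fin (m + 1) => c i < c (i + 1))).card

/-- A digraph on a linearly ordered vertex set is semiacyclic if it contains no
ascending directed cycle. -/
def Semiacyclic {α : Type*} [LinearOrder α] (R : α → α → Prop) : Prop :=
  ∀ (m : ℕ) (c : Fin (m + 1) → α), IsCycle R c → ¬ IsAscendingCycle c

/-- Lexicographic order on coin types. -/
def TypeLt (a b x a' b' x' : ℝ) : Prop :=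
  a < a' ∨ (a = a' ∧ b < b') ∨ (a = a' ∧ b = b' ∧ x < x')

/-- The 3-cycle tournament on `{0,1,2}` with `0 → 1`, `1 → 2`, `2 → 0`. -/
def C3 (u v : Fin 3) : Prop := v = u + 1

/-- The direct product of two tournaments. -/
def TournProd {V₁ V₂ : Type*} (R₁ : V₁ → V₁ → Prop) (R₂ : V₂ → V₂ → Prop)
    (u v : V₁ × V₂) : Prop :=
  R₁ u.1 v.1 ∨ (u.1 = v.1 ∧ R₂ u.2 v.2)

/-- Exactly one of four propositions holds. -/
def ExactlyOne (P Q R S : Prop) : Prop :=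
  (P ∧ ¬Q ∧ ¬R ∧ ¬S) ∨ (¬P ∧ Q ∧ ¬R ∧ ¬S) ∨ (¬P ∧ ¬Q ∧ R ∧ ¬S) ∨ (¬P ∧ ¬Q ∧ ¬R ∧ S)

set_option maxHeartbeats 1000000 in
/-- Characterization of dominance for lexicographically ordered types. -/
theorem stmt1 (a b x a' b' x' : ℝ) (hab : a < b) (hab' : a' < b')
    (hx : 0 < x) (hx' : 0 < x') (hlex : TypeLt a b x a' b' x') :
    Dominates a b x a' b' x' ↔
      ExactlyOne
        (a = a' ∧ a' < b ∧ b < b' ∧ 1 / x + 1 < 1 / x')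
        (a < a' ∧ a' < b' ∧ b' < b ∧ 1 < x)
        (a < a' ∧ a' < b ∧ b = b' ∧ x' + 1 < x)
        (a < a' ∧ a' < b ∧ b < b' ∧ (1 / x + 1) * (x' + 1) < 2) := by
  have hx1 : (0:ℝ) < 1 + x := by linarith
  have hx1' : (0:ℝ) < 1 + x' := by linarith
  have hxn : x ≠ 0 := hx.ne'
  have hxn' : x' ≠ 0 := hx'.ne'
  have hx1n : (1:ℝ) + x ≠ 0 := hx1.ne'
  have hx1n' : (1:ℝ) + x' ≠ 0 := hx1'.ne'
  have hden : (0:ℝ) < (1 + x) * (1 + x') := mul_pos hx1 hx1'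
  rcases hlex with ha | ⟨rfl, hbb'⟩ | ⟨rfl, rfl, hxx'⟩
  · -- a < a'
    rcases lt_trichotomy b a' with hba | hba | hba
    · -- b < a'
      have e1 : winProb a b x a' b' x' = 0 / ((1 + x) * (1 + x')) := by
        simp only [winProb]
        rw [if_neg (by linarith), if_neg (by linarith), if_neg (by linarith),
          if_neg (by linarith)]
        ring
      have e2 : winProb a' b' x' a b x = ((1 + x) * (1 + x')) / ((1 + x) * (1 + x')) := by
        simp only [winProb]
        rw [if_pos (by linarith), if_pos (by linarith), if_pos (by linarith),
          if_pos (by linarith)]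
        field_simp
        ring
      rw [Dominates, e1, e2, div_lt_div_iff_of_pos_right hden]
      constructor
      · intro h; exfalso; nlinarith
      · rintro (⟨hP, _⟩ | ⟨_, hQ, _⟩ | ⟨_, _, hR, _⟩ | ⟨_, _, _, hS⟩) <;> exfalso
        · exact absurd hP.1 ha.ne
        · linarith [hQ.2.2.1]
        · linarith [hR.2.2.1]
        · linarith [hS.2.1]
    · -- b = a'
      subst hba
      have e1 : winProb a b x b b' x' = 0 / ((1 + x) * (1 + x')) := by
        simp only [winProb]
        rw [if_neg (by linarith), if_neg (by linarith), if_neg (by linarith),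
          if_neg (by linarith)]
        ring
      have e2 : winProb b b' x' a b x = (1 + x' + x' * x) / ((1 + x) * (1 + x')) := by
        simp only [winProb]
        rw [if_pos (by linarith), if_neg (by linarith), if_pos (by linarith),
          if_pos (by linarith)]
        field_simp
        try ring
        try exact Or.inl trivial
      rw [Dominates, e1, e2, div_lt_div_iff_of_pos_right hden]
      constructor
      · intro h; exfalso; nlinarith
      · rintro (⟨hP, _⟩ | ⟨_, hQ, _⟩ | ⟨_, _, hR, _⟩ | ⟨_, _, _, hS⟩) <;> exfalso
        · exact absurd hP.1 ha.ne
        · linarith [hQ.2.2.1]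
        · linarith [hR.2.1]
        · linarith [hS.2.1]
    · -- a' < b
      rcases lt_trichotomy b' b with hb'b | hb'b | hb'b
      · -- b' < b  (case Q)
        have e1 : winProb a b x a' b' x' = (x * (1 + x')) / ((1 + x) * (1 + x')) := by
          simp only [winProb]
          rw [if_neg (by linarith), if_neg (by linarith), if_pos (by linarith),
            if_pos (by linarith)]
          field_simp
          try ring
          try exact Or.inl trivial
        have e2 : winProb a' b' x' a b x = (1 + x') / ((1 + x) * (1 + x')) := by
          simp only [winProb]
          rw [if_pos (by linarith), if_neg (by linarith), if_pos (by linarith),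
            if_neg (by linarith)]
          field_simp
          try ring
          try exact Or.inl trivial
        have hrhs : ExactlyOne (a = a' ∧ a' < b ∧ b < b' ∧ 1 / x + 1 < 1 / x')
            (a < a' ∧ a' < b' ∧ b' < b ∧ 1 < x)
            (a < a' ∧ a' < b ∧ b = b' ∧ x' + 1 < x)
            (a < a' ∧ a' < b ∧ b < b' ∧ (1 / x + 1) * (x' + 1) < 2) ↔ 1 < x := by
          constructor
          · rintro (⟨hP, _⟩ | ⟨_, hQ, _⟩ | ⟨_, _, hR, _⟩ | ⟨_, _, _, hS⟩)
            · exact absurd hP.1 ha.ne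
            · exact hQ.2.2.2
            · exact absurd (hR.2.2.1 ▸ hb'b) (lt_irrefl b)
            · exact absurd (hS.2.2.1.trans hb'b) (lt_irrefl b)
          · intro h1
            refine Or.inr (Or.inl ⟨fun h => absurd h.1 ha.ne, ⟨ha, hab', hb'b, h1⟩,
              fun h => ?_, fun h => ?_⟩)
            · exact absurd (h.2.2.1 ▸ hb'b) (lt_irrefl b)
            · exact absurd (h.2.2.1.trans hb'b) (lt_irrefl b)
        rw [Dominates, e1, e2, div_lt_div_iff_of_pos_right hden, hrhs]
        constructor <;> intro h <;> nlinarith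
      · -- b' = b  (case R)
        subst hb'b
        have e1 : winProb a b' x a' b' x' = x / ((1 + x) * (1 + x')) := by
          simp only [winProb]
          rw [if_neg (by linarith), if_neg (by linarith), if_pos (by linarith),
            if_neg (by linarith)]
          field_simp
          ring
        have e2 : winProb a' b' x' a b' x = (1 + x') / ((1 + x) * (1 + x')) := by
          simp only [winProb]
          rw [if_pos (by linarith), if_neg (by linarith), if_pos (by linarith),
            if_neg (by linarith)]
          field_simp
          try ring
          try exact Or.inl trivial
        have hrhs : ExactlyOne (a = a' ∧ a' < b' ∧ b' < b' ∧ 1 / x + 1 < 1 / x')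
            (a < a' ∧ a' < b' ∧ b' < b' ∧ 1 < x)
            (a < a' ∧ a' < b' ∧ b' = b' ∧ x' + 1 < x)
            (a < a' ∧ a' < b' ∧ b' < b' ∧ (1 / x + 1) * (x' + 1) < 2) ↔ x' + 1 < x := by
          constructor
          · rintro (⟨hP, _⟩ | ⟨_, hQ, _⟩ | ⟨_, _, hR, _⟩ | ⟨_, _, _, hS⟩)
            · exact absurd hP.2.2.1 (lt_irrefl b')
            · exact absurd hQ.2.2.1 (lt_irrefl b')
            · exact hR.2.2.2
            · exact absurd hS.2.2.1 (lt_irrefl b')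
          · intro h1
            exact Or.inr (Or.inr (Or.inl ⟨fun h => absurd h.2.2.1 (lt_irrefl b'),
              fun h => absurd h.2.2.1 (lt_irrefl b'), ⟨ha, hab', rfl, h1⟩,
              fun h => absurd h.2.2.1 (lt_irrefl b')⟩))
        rw [Dominates, e1, e2, div_lt_div_iff_of_pos_right hden, hrhs]
        constructor <;> intro h <;> linarith
      · -- b < b'  (case S)
        have e1 : winProb a b x a' b' x' = x / ((1 + x) * (1 + x')) := by
          simp only [winProb]
          rw [if_neg (by linarith), if_neg (by linarith), if_pos (by linarith),
            if_neg (by linarith)]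
          field_simp
          ring
        have e2 : winProb a' b' x' a b x = (1 + x' + x * x') / ((1 + x) * (1 + x')) := by
          simp only [winProb]
          rw [if_pos (by linarith), if_neg (by linarith), if_pos (by linarith),
            if_pos (by linarith)]
          field_simp
          try ring
          try exact Or.inl trivial
        have hrhs : ExactlyOne (a = a' ∧ a' < b ∧ b < b' ∧ 1 / x + 1 < 1 / x')
            (a < a' ∧ a' < b' ∧ b' < b ∧ 1 < x)
            (a < a' ∧ a' < b ∧ b = b' ∧ x' + 1 < x)
            (a < a' ∧ a' < b ∧ b < b' ∧ (1 / x + 1) * (x' + 1) < 2) ↔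
            (1 / x + 1) * (x' + 1) < 2 := by
          constructor
          · rintro (⟨hP, _⟩ | ⟨_, hQ, _⟩ | ⟨_, _, hR, _⟩ | ⟨_, _, _, hS⟩)
            · exact absurd hP.1 ha.ne
            · exact absurd (hQ.2.2.1.trans hb'b) (lt_irrefl b')
            · exact absurd (hR.2.2.1 ▸ hb'b) (lt_irrefl b')
            · exact hS.2.2.2
          · intro h1
            refine Or.inr (Or.inr (Or.inr ⟨fun h => absurd h.1 ha.ne,
              fun h => absurd (h.2.2.1.trans hb'b) (lt_irrefl b'),
              fun h => absurd (h.2.2.1 ▸ hb'b) (lt_irrefl b'), ⟨ha, hba, hb'b, h1⟩⟩))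
        rw [Dominates, e1, e2, div_lt_div_iff_of_pos_right hden, hrhs]
        have hrw : (1 / x + 1) * (x' + 1) = (1 + x) * (x' + 1) / x := by
          field_simp
          try ring
        rw [hrw, div_lt_iff₀ hx]
        constructor <;> intro h <;> nlinarith
  · -- a = a', b < b'  (case P)
    have e1 : winProb a b x a b' x' = x / ((1 + x) * (1 + x')) := by
      simp only [winProb]
      rw [if_neg (lt_irrefl a), if_neg (by linarith), if_pos hab, if_neg (by linarith)]
      field_simp
      ring
    have e2 : winProb a b' x' a b x = (x' * (1 + x)) / ((1 + x) * (1 + x')) := by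
      simp only [winProb]
      rw [if_neg (lt_irrefl a), if_neg (by linarith), if_pos (by linarith),
        if_pos (by linarith)]
      field_simp
      try ring
      try exact Or.inl trivial
    have hrhs : ExactlyOne (a = a ∧ a < b ∧ b < b' ∧ 1 / x + 1 < 1 / x')
        (a < a ∧ a < b' ∧ b' < b ∧ 1 < x)
        (a < a ∧ a < b ∧ b = b' ∧ x' + 1 < x)
        (a < a ∧ a < b ∧ b < b' ∧ (1 / x + 1) * (x' + 1) < 2) ↔
        1 / x + 1 < 1 / x' := by
      constructor
      · rintro (⟨hP, _⟩ | ⟨_, hQ, _⟩ | ⟨_, _, hR, _⟩ | ⟨_, _, _, hS⟩)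
        · exact hP.2.2.2
        · exact absurd hQ.1 (lt_irrefl a)
        · exact absurd hR.1 (lt_irrefl a)
        · exact absurd hS.1 (lt_irrefl a)
      · intro hC
        exact Or.inl ⟨⟨rfl, hab, hbb', hC⟩, fun h => absurd h.1 (lt_irrefl a),
          fun h => absurd h.1 (lt_irrefl a), fun h => absurd h.1 (lt_irrefl a)⟩
    rw [Dominates, e1, e2, div_lt_div_iff_of_pos_right hden, hrhs]
    have hrw : (1 / x + 1 : ℝ) = (1 + x) / x := by field_simp
    rw [hrw, div_lt_div_iff₀ hx hx']
    constructor <;> intro h <;> nlinarith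
  · -- a = a', b = b', x < x'
    have e1 : winProb a b x a b x' = x / ((1 + x) * (1 + x')) := by
      simp only [winProb]
      rw [if_neg (lt_irrefl a), if_neg (by linarith), if_pos hab, if_neg (lt_irrefl b)]
      field_simp
      ring
    have e2 : winProb a b x' a b x = x' / ((1 + x) * (1 + x')) := by
      simp only [winProb]
      rw [if_neg (lt_irrefl a), if_neg (by linarith), if_pos hab, if_neg (lt_irrefl b)]
      field_simp
      try ring
      try exact Or.inl trivial
    rw [Dominates, e1, e2, div_lt_div_iff_of_pos_right hden]
    constructor
    · intro h; exfalso; linarith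
    · rintro (⟨hP, _⟩ | ⟨_, hQ, _⟩ | ⟨_, _, hR, _⟩ | ⟨_, _, _, hS⟩) <;> exfalso
      · exact absurd hP.2.2.1 (lt_irrefl b)
      · exact absurd hQ.1 (lt_irrefl a)
      · exact absurd hR.1 (lt_irrefl a)
      · exact absurd hS.1 (lt_irrefl a)
end

section
/- Let (a,b,x) and (a',b',x') be coin types with x > 0, x' > 0 and a = a' < b < b'. Then the coin (a,b,x) dominates the coin (a',b',x') if and only if 1/x' > 1/x + 1. -/
open Finset

/-- For types with `a = a' < b < b'`, dominance holds iff `1/x' > 1/x + 1`. -/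
theorem stmt2 (a b x a' b' x' : ℝ) (hx : 0 < x) (hx' : 0 < x')
    (h1 : a = a') (h2 : a' < b) (h3 : b < b') :
    Dominates a b x a' b' x' ↔ 1 / x + 1 < 1 / x' := by
  have h1x : (0:ℝ) < 1 + x := by linarith
  have h1x' : (0:ℝ) < 1 + x' := by linarith
  have hD : (0:ℝ) < (1+x)*(1+x') := mul_pos h1x h1x'
  unfold Dominates winProb
  simp only [if_neg (by linarith : ¬ a' < a), if_neg (by linarith : ¬ b' < a),
    if_pos (by linarith : a' < b), if_neg (by linarith : ¬ b' < b),
    if_neg (by linarith : ¬ a < a'), if_neg (by linarith : ¬ b < a'),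
    if_pos (by linarith : a < b'), if_pos h3, mul_one, mul_zero, add_zero, zero_add]
  rw [show x'/(1+x') * (1/(1+x)) + x'/(1+x')*(x/(1+x)) = x'*(1+x)/((1+x)*(1+x')) by
      field_simp,
    show x/(1+x)*(1/(1+x')) = x/((1+x)*(1+x')) by field_simp,
    div_lt_div_iff₀ hD hD,
    show (1:ℝ)/x + 1 = (1+x)/x by field_simp,
    div_lt_div_iff₀ hx hx']
  constructor <;> intro h <;> nlinarith
end

section
/- Let (a,b,x) and (a',b',x') be coin types with x > 0, x' > 0 and a < a' < b < b'. Then the coin (a,b,x) dominates the coin (a',b',x') if and only if (1/x + 1)(x' + 1) < 2. -/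
open Finset

/-- For types with `a < a' < b < b'`, dominance holds iff `(1/x + 1)(x' + 1) < 2`. -/
theorem stmt3 (a b x a' b' x' : ℝ) (hx : 0 < x) (hx' : 0 < x')
    (h1 : a < a') (h2 : a' < b) (h3 : b < b') :
    Dominates a b x a' b' x' ↔ (1 / x + 1) * (x' + 1) < 2 := by
  have hxa : (0:ℝ) < 1 + x := by linarith
  have hxa' : (0:ℝ) < 1 + x' := by linarith
  unfold Dominates winProb
  rw [if_pos (by linarith), if_neg (by linarith), if_pos (by linarith), if_pos (by linarith),
      if_neg (by linarith), if_neg (by linarith), if_pos (by linarith), if_neg (by linarith)]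
  have key : (1 + x' + x * x' < x) ↔ (1 / x + 1) * (x' + 1) < 2 := by
    constructor <;> intro h
    · rw [div_add' _ _ _ (ne_of_gt hx), div_mul_eq_mul_div, div_lt_iff₀ hx]
      nlinarith
    · rw [div_add' _ _ _ (ne_of_gt hx), div_mul_eq_mul_div, div_lt_iff₀ hx] at h
      nlinarith
  rw [← key]
  constructor <;> intro h
  · field_simp at h
    nlinarith [mul_pos hxa hxa']
  · field_simp
    nlinarith [mul_pos hxa hxa']
end

section
/- Let (a_i,b_i,x_i) and (a_j,b_j,x_j) be coin types with a_i ≤ b_i, a_j ≤ b_j, x_i > 0 and x_j ≥ 1. If the coin (a_i,b_i,x_i) dominates the coin (a_j,b_j,x_j), then b_i ≥ b_j. -/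
open Finset

/-- If coin `i` dominates coin `j` and coin `j` is not a loser coin,
then `b i ≥ b j`. -/
theorem stmt4 (ai bi xi aj bj xj : ℝ) (hi : ai ≤ bi) (hj : aj ≤ bj)
    (hxi : 0 < xi) (hxj : 1 ≤ xj)
    (hdom : Dominates ai bi xi aj bj xj) : bj ≤ bi := by
  by_contra h
  push_neg at h
  unfold Dominates winProb at hdom
  rw [if_neg (by linarith : ¬ bj < ai), if_neg (by linarith : ¬ bj < bi),
      if_pos (by linarith : ai < bj), if_pos (by linarith : bi < bj)] at hdom
  have p1 : (0:ℝ) < 1 + xi := by linarith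
  have p2 : (0:ℝ) < 1 + xj := by linarith
  set u : ℝ := 1 / (1 + xi) with hu
  set v : ℝ := xi / (1 + xi) with hv
  set p : ℝ := 1 / (1 + xj) with hp
  set q : ℝ := xj / (1 + xj) with hq
  have hu0 : 0 < u := by positivity
  have hv0 : 0 < v := by positivity
  have hp0 : 0 < p := by positivity
  have huv : u + v = 1 := by rw [hu, hv]; field_simp
  have hpq : p ≤ q := by rw [hp, hq]; gcongr
  set t1 : ℝ := if aj < ai then (1:ℝ) else 0 with ht1
  set t2 : ℝ := if aj < bi then (1:ℝ) else 0 with ht2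
  set s1 : ℝ := if ai < aj then (1:ℝ) else 0 with hs1
  set s2 : ℝ := if bi < aj then (1:ℝ) else 0 with hs2
  have b1 : 0 ≤ t1 ∧ t1 ≤ 1 := by rw [ht1]; split_ifs <;> norm_num
  have b2 : 0 ≤ t2 ∧ t2 ≤ 1 := by rw [ht2]; split_ifs <;> norm_num
  have b3 : 0 ≤ s1 := by rw [hs1]; split_ifs <;> norm_num
  have b4 : 0 ≤ s2 := by rw [hs2]; split_ifs <;> norm_num
  nlinarith [mul_nonneg (mul_nonneg hp0.le hu0.le) (by linarith [b1.2] : 0 ≤ 1 - t1),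
    mul_nonneg (mul_nonneg hp0.le hv0.le) (by linarith [b2.2] : 0 ≤ 1 - t2),
    mul_nonneg (mul_nonneg hp0.le hu0.le) b3,
    mul_nonneg (mul_nonneg hp0.le hv0.le) b4,
    mul_le_mul_of_nonneg_right hpq hu0.le,
    mul_le_mul_of_nonneg_right hpq hv0.le]
end

section
/- Let c_1, …, c_n be coins with types (a_i, b_i, x_i) satisfying a_i ≤ b_i and x_i ≥ 1 for all i. If i_1 → i_2 → … → i_k → i_1 is a directed cycle in the dominance graph of these coins, then b_{i_1} = b_{i_2} = … = b_{i_k}. -/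
open Finset

lemma dom_b_le {a b x a' b' x' : ℝ} (hab : a ≤ b) (hab' : a' ≤ b')
    (hx : 1 ≤ x) (hx' : 1 ≤ x')
    (hd : Dominates a b x a' b' x') : b' ≤ b := by
  by_contra h
  push_neg at h
  have hx0 : (0:ℝ) < 1 + x := by linarith
  have hx0' : (0:ℝ) < 1 + x' := by linarith
  apply absurd hd
  simp only [Dominates, not_lt, winProb]
  have e1 : ¬ b' < a := by linarith
  have e2 : ¬ b' < b := by linarith
  have e3 : a < b' := by linarith
  have e4 : b < b' := h
  rw [if_neg e1, if_neg e2, if_pos e3, if_pos e4]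
  have bound : ∀ P : Prop, ∀ inst : Decidable P,
      (0:ℝ) ≤ (if P then (1:ℝ) else 0) ∧ (if P then (1:ℝ) else 0) ≤ 1 := by
    intro P inst; split <;> norm_num
  have B1 := bound (a' < a) inferInstance
  have B2 := bound (a' < b) inferInstance
  have B3 := bound (a < a') inferInstance
  have B4 := bound (b < a') inferInstance
  generalize hg1 : (if a' < a then (1:ℝ) else 0) = t1 at B1 ⊢
  generalize hg2 : (if a' < b then (1:ℝ) else 0) = t2 at B2 ⊢
  generalize hg3 : (if a < a' then (1:ℝ) else 0) = s1 at B3 ⊢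
  generalize hg4 : (if b < a' then (1:ℝ) else 0) = s2 at B4 ⊢
  obtain ⟨ht10, ht11⟩ := B1
  obtain ⟨ht20, ht21⟩ := B2
  obtain ⟨hs10, hs11⟩ := B3
  obtain ⟨hs20, hs21⟩ := B4
  have hp0 : (0:ℝ) < 1/(1+x) := by positivity
  have hp0' : (0:ℝ) < 1/(1+x') := by positivity
  have hq : x/(1+x) = 1 - 1/(1+x) := by field_simp; ring
  have hq' : x'/(1+x') = 1 - 1/(1+x') := by field_simp; ring
  have hpq : 1/(1+x) ≤ x/(1+x) := by
    rw [div_le_div_iff_of_pos_right hx0]; exact hx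
  have hpq' : 1/(1+x') ≤ x'/(1+x') := by
    rw [div_le_div_iff_of_pos_right hx0']; exact hx'
  have hp1 : 1/(1+x) ≤ 1 := by rw [hq] at hpq; linarith
  have hp1' : 1/(1+x') ≤ 1 := by rw [hq'] at hpq'; linarith
  rw [hq, hq']
  nlinarith [mul_nonneg hs10 (mul_pos hp0 hp0').le,
    mul_nonneg hs20 (mul_nonneg (sub_nonneg.mpr hp1) hp0'.le),
    mul_nonneg (sub_nonneg.mpr ht11) (mul_pos hp0 hp0').le,
    mul_nonneg (sub_nonneg.mpr ht21) (mul_nonneg (sub_nonneg.mpr hp1) hp0'.le),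
    mul_pos hp0 hp0']

/-- In a system of winner and fair coins, all coins on a directed cycle of the
dominance graph have the same larger side. -/
theorem stmt5 {n : ℕ} (a b x : Fin n → ℝ)
    (hcoin : ∀ i, a i ≤ b i ∧ 1 ≤ x i)
    {k : ℕ} (c : Fin (k + 1) → Fin n)
    (hcyc : IsCycle
      (fun i j : Fin n => Dominates (a i) (b i) (x i) (a j) (b j) (x j)) c) :
    ∀ p q : Fin (k + 1), b (c p) = b (c q) := by
  have hstep : ∀ i : Fin (k + 1), b (c (i + 1)) ≤ b (c i) := by
    intro i
    exact dom_b_le (hcoin (c i)).1 (hcoin (c (i+1))).1 (hcoin (c i)).2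
      (hcoin (c (i+1))).2 (hcyc.2 i)
  have succ_eq : ∀ (j : ℕ) (hj : j < k),
      (⟨j, by omega⟩ : Fin (k + 1)) + 1 = ⟨j + 1, by omega⟩ := by
    intro j hj
    apply Fin.ext
    simp [Fin.add_def]
    omega
  have key : ∀ (j : ℕ) (hj : j ≤ k) (i : ℕ) (hi : i ≤ j),
      b (c ⟨j, by omega⟩) ≤ b (c ⟨i, by omega⟩) := by
    intro j
    induction j with
    | zero => intro _ i hi; interval_cases i; exact le_refl _
    | succ m ih =>
      intro hj i hi
      rcases Nat.eq_or_lt_of_le hi with he | hlt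
      · subst he; exact le_refl _
      · have h1 : b (c ⟨m + 1, by omega⟩) ≤ b (c ⟨m, by omega⟩) := by
          rw [← succ_eq m (by omega)]
          exact hstep _
        exact le_trans h1 (ih (by omega) i (by omega))
  have wrap : ((⟨k, by omega⟩ : Fin (k + 1)) + 1) = ⟨0, by omega⟩ := by
    apply Fin.ext
    simp [Fin.add_def]
  have top : ∀ p : Fin (k + 1), b (c ⟨0, by omega⟩) ≤ b (c p) := by
    intro p
    calc b (c ⟨0, by omega⟩) = b (c ((⟨k, by omega⟩ : Fin (k+1)) + 1)) := by rw [wrap]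
      _ ≤ b (c ⟨k, by omega⟩) := hstep _
      _ ≤ b (c ⟨p.1, by omega⟩) := key k le_rfl p.1 (by omega)
      _ = b (c p) := by congr 1
  have bot : ∀ p : Fin (k + 1), b (c p) ≤ b (c ⟨0, by omega⟩) := by
    intro p
    have := key p.1 (by omega) 0 (by omega)
    simpa using this
  intro p q
  have := le_antisymm (bot p) (top p)
  have h2 := le_antisymm (bot q) (top q)
  rw [this, h2]
end

section
/- Let c_1, …, c_n be coins with types (a_i, b_i, x_i) satisfying a_i < b_i and x_i ≥ 1 for all i (i.e., no loser coins), listed so that the types are in strictly increasing lexicographic order. If the dominance graph of these coins is a tournament on {1, …, n}, then this tournament is semiacyclic. -/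
open Finset

lemma dom_iff (a b x a' b' x' : ℝ) (h1 : (0:ℝ) < 1 + x) (h2 : (0:ℝ) < 1 + x') :
    Dominates a b x a' b' x' ↔ 0 <
      ((if a' < a then (1:ℝ) else 0) - (if a < a' then 1 else 0))
      + x' * ((if b' < a then (1:ℝ) else 0) - (if a < b' then 1 else 0))
      + x * ((if a' < b then (1:ℝ) else 0) - (if b < a' then 1 else 0))
      + x * x' * ((if b' < b then (1:ℝ) else 0) - (if b < b' then 1 else 0)) := by
  unfold Dominates winProb
  rw [← sub_pos]
  generalize (if a' < a then (1:ℝ) else 0) = s1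
  generalize (if a < a' then (1:ℝ) else 0) = t1
  generalize (if b' < a then (1:ℝ) else 0) = s2
  generalize (if a < b' then (1:ℝ) else 0) = t2
  generalize (if a' < b then (1:ℝ) else 0) = s3
  generalize (if b < a' then (1:ℝ) else 0) = t3
  generalize (if b' < b then (1:ℝ) else 0) = s4
  generalize (if b < b' then (1:ℝ) else 0) = t4
  have key : (1 / (1 + x)) * (1 / (1 + x')) * s1 + (1 / (1 + x)) * (x' / (1 + x')) * s2
      + (x / (1 + x)) * (1 / (1 + x')) * s3 + (x / (1 + x)) * (x' / (1 + x')) * s4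
      - ((1 / (1 + x')) * (1 / (1 + x)) * t1 + (1 / (1 + x')) * (x / (1 + x)) * t3
      + (x' / (1 + x')) * (1 / (1 + x)) * t2 + (x' / (1 + x')) * (x / (1 + x)) * t4) =
      ((s1 - t1) + x' * (s2 - t2) + x * (s3 - t3) + x * x' * (s4 - t4)) / ((1 + x) * (1 + x')) := by
    field_simp
    ring
  rw [key, lt_div_iff₀ (mul_pos h1 h2), zero_mul]

lemma lemA (a b x a' b' x' : ℝ) (hab : a < b) (hab' : a' < b') (hx : 1 ≤ x) (hx' : 1 ≤ x')
    (hbb : b < b') : ¬ Dominates a b x a' b' x' := by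
  rw [dom_iff a b x a' b' x' (by linarith) (by linarith)]
  push_neg
  rw [if_neg (by linarith : ¬ b' < b), if_pos hbb, if_neg (by linarith : ¬ b' < a),
    if_pos (by linarith : a < b')]
  split_ifs <;>
    nlinarith [mul_nonneg (sub_nonneg.2 hx') (by linarith : (0:ℝ) ≤ 1 + x)]

lemma lemB1 (a b x a' b' x' : ℝ) (hab : a < b) (hab' : a' < b') (hx : 1 ≤ x) (hx' : 1 ≤ x')
    (hbb : b = b') (hdom : Dominates a b x a' b' x') : x' < x + 1 := by
  rw [dom_iff a b x a' b' x' (by linarith) (by linarith)] at hdom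
  subst hbb
  rw [if_neg (lt_irrefl b), if_neg (by linarith : ¬ b < a), if_pos hab,
    if_pos hab', if_neg (by linarith : ¬ b < a')] at hdom
  split_ifs at hdom <;> linarith

lemma lemB2 (a b x a' b' x' : ℝ) (hab : a < b) (hab' : a' < b') (hx : 1 ≤ x) (hx' : 1 ≤ x')
    (hbb : b = b') (hlt : a < a' ∨ (a = a' ∧ x < x')) (hdom : Dominates a b x a' b' x') :
    x' + 1 < x := by
  rw [dom_iff a b x a' b' x' (by linarith) (by linarith)] at hdom
  subst hbb
  rw [if_neg (lt_irrefl b), if_neg (by linarith : ¬ b < a), if_pos hab,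
    if_pos hab', if_neg (by linarith : ¬ b < a')] at hdom
  rcases hlt with h | ⟨h, h'⟩
  · rw [if_neg (by linarith : ¬ a' < a), if_pos h] at hdom
    linarith
  · rw [if_neg (by linarith : ¬ a' < a), if_neg (by linarith : ¬ a < a')] at hdom
    linarith

/-- A set of winner and fair coins listed in increasing lexicographic order of
their types whose dominance graph is a tournament yields a semiacyclic tournament. -/
theorem stmt6 {n : ℕ} (a b x : Fin n → ℝ)
    (hcoin : ∀ i, a i < b i ∧ 1 ≤ x i)
    (hlex : ∀ i j : Fin n, i < j →
      TypeLt (a i) (b i) (x i) (a j) (b j) (x j))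
    (htour : IsTournament
      (fun i j : Fin n => Dominates (a i) (b i) (x i) (a j) (b j) (x j))) :
    Semiacyclic
      (fun i j : Fin n => Dominates (a i) (b i) (x i) (a j) (b j) (x j)) := by
  intro m c hcyc hasc
  obtain ⟨hinj, hedge⟩ := hcyc
  have cne : ∀ i : Fin (m+1), c i ≠ c (i+1) := by
    intro i h
    have h0 := hedge i
    rw [← h] at h0
    exact htour.1 (c i) h0
  have hble : ∀ i : Fin (m+1), b (c (i+1)) ≤ b (c i) := fun i =>
    le_of_not_gt fun hlt => lemA _ _ _ _ _ _ (hcoin _).1 (hcoin _).1 (hcoin _).2 (hcoin _).2 hlt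
      (hedge i)
  have hsumb : ∑ i : Fin (m+1), b (c (i+1)) = ∑ i : Fin (m+1), b (c i) :=
    Equiv.sum_comp (Equiv.addRight (1 : Fin (m+1))) (fun j => b (c j))
  have hbeq : ∀ i : Fin (m+1), b (c (i+1)) = b (c i) := by
    by_contra hcon
    push_neg at hcon
    obtain ⟨i0, hi0⟩ := hcon
    have : ∑ i : Fin (m+1), b (c (i+1)) < ∑ i : Fin (m+1), b (c i) :=
      Finset.sum_lt_sum (fun i _ => hble i)
        ⟨i0, Finset.mem_univ _, lt_of_le_of_ne (hble i0) hi0⟩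
    exact absurd hsumb (ne_of_lt this)
  have hxstep : ∀ i : Fin (m+1),
      x (c (i+1)) < x (c i) + (if c i < c (i+1) then (-1:ℝ) else 1) := by
    intro i
    rcases lt_or_gt_of_ne (cne i) with hlt | hgt
    · rw [if_pos hlt]
      have hbeq' : b (c i) = b (c (i+1)) := (hbeq i).symm
      have hlex' := hlex _ _ hlt
      have hcase : a (c i) < a (c (i+1)) ∨
          (a (c i) = a (c (i+1)) ∧ x (c i) < x (c (i+1))) := by
        rcases hlex' with h | ⟨h1, h2⟩ | ⟨h1, h2, h3⟩
        · exact Or.inl h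
        · exact absurd hbeq' (ne_of_lt h2)
        · exact Or.inr ⟨h1, h3⟩
      have := lemB2 _ _ _ _ _ _ (hcoin _).1 (hcoin _).1 (hcoin _).2 (hcoin _).2 hbeq' hcase
        (hedge i)
      linarith
    · rw [if_neg (not_lt.2 hgt.le)]
      have := lemB1 _ _ _ _ _ _ (hcoin _).1 (hcoin _).1 (hcoin _).2 (hcoin _).2
        (hbeq i).symm (hedge i)
      linarith
  have hsumx : ∑ i : Fin (m+1), x (c (i+1)) = ∑ i : Fin (m+1), x (c i) :=
    Equiv.sum_comp (Equiv.addRight (1 : Fin (m+1))) (fun j => x (c j))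
  have hlt2 : ∑ i : Fin (m+1), x (c (i+1)) <
      ∑ i : Fin (m+1), (x (c i) + (if c i < c (i+1) then (-1:ℝ) else 1)) :=
    Finset.sum_lt_sum_of_nonempty Finset.univ_nonempty (fun i _ => hxstep i)
  rw [Finset.sum_add_distrib] at hlt2
  have hcardeq : (univ.filter (fun i : Fin (m+1) => ¬ c i < c (i+1))).card =
      (univ.filter (fun i : Fin (m+1) => c (i+1) < c i)).card := by
    congr 1
    apply Finset.filter_congr
    intro i _
    constructor
    · intro h
      exact lt_of_le_of_ne (not_lt.1 h) (cne i).symm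
    · exact fun h => not_lt.2 h.le
  have hdelta : ∑ i : Fin (m+1), (if c i < c (i+1) then (-1:ℝ) else 1) ≤ 0 := by
    rw [Finset.sum_ite, Finset.sum_const, Finset.sum_const, hcardeq]
    have hcard := hasc
    unfold IsAscendingCycle at hcard
    have h1 : ((univ.filter (fun i : Fin (m+1) => c (i+1) < c i)).card : ℝ) ≤
        ((univ.filter (fun i : Fin (m+1) => c i < c (i+1))).card : ℝ) := by
      exact_mod_cast hcard
    simp only [nsmul_eq_mul]
    linarith
  linarith
end

section
/- Every semiacyclic tournament T on {1, …, n} is the dominance graph of a set of n winner coins; that is, there exist coins c_1, …, c_n with types (a_i, b_i, x_i) satisfying a_i < b_i and x_i > 1 for all i, such that for all distinct i, j ∈ {1,…,n}, coin c_i dominates coin c_j if and only if i → j holds in T. -/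
open Finset

namespace Stmt7A
variable {n : ℕ}

variable {n : ℕ}

def pw (w : Fin n → Fin n → ℝ) : List (Fin n) → ℝ
  | [] => 0
  | [_] => 0
  | a :: b :: t => w a b + pw w (b :: t)

@[simp] lemma pw_nil (w : Fin n → Fin n → ℝ) : pw w [] = 0 := rfl
@[simp] lemma pw_single (w : Fin n → Fin n → ℝ) (a : Fin n) : pw w [a] = 0 := rfl
@[simp] lemma pw_cons_cons (w : Fin n → Fin n → ℝ) (a b : Fin n) (t : List (Fin n)) :
    pw w (a :: b :: t) = w a b + pw w (b :: t) := rfl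

lemma pw_concat (w : Fin n → Fin n → ℝ) (v : Fin n) :
    ∀ (l : List (Fin n)) (u : Fin n), l.getLast? = some u →
      pw w (l ++ [v]) = pw w l + w u v
  | [], u, h => by simp at h
  | [a], u, h => by simp at h; subst h; simp
  | a :: b :: t, u, h => by
      have ih := pw_concat w v (b :: t) u (by simpa using h)
      simp only [List.cons_append, pw_cons_cons] at ih ⊢
      rw [ih]; ring

lemma pw_split (w : Fin n → Fin n → ℝ) :
    ∀ (A : List (Fin n)) (v : Fin n) (B : List (Fin n)),
      pw w (A ++ v :: B) = pw w (A ++ [v]) + pw w (v :: B)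
  | [], v, B => by simp
  | [a], v, B => by simp
  | a :: b :: t, v, B => by
      have ih := pw_split w (b :: t) v B
      simp only [List.cons_append, pw_cons_cons] at ih ⊢
      rw [ih]; ring

lemma pw_shift (w : Fin n → Fin n → ℝ) (ε : ℝ) :
    ∀ l : List (Fin n), pw (fun a b => w a b - ε) l = pw w l - (l.length - 1 : ℕ) * ε
  | [] => by simp
  | [a] => by simp
  | a :: b :: t => by
      have ih := pw_shift w ε (b :: t)
      simp only [pw_cons_cons, ih, List.length_cons]
      have : (t.length + 1 + 1 - 1 : ℕ) = (t.length + 1 - 1 : ℕ) + 1 := by omega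
      rw [this]
      push_cast
      ring

lemma pw_ge (w : Fin n → Fin n → ℝ) (hw : ∀ a b, -2 ≤ w a b) :
    ∀ l : List (Fin n), -(2 * l.length) ≤ pw w l
  | [] => by simp
  | [a] => by simp
  | a :: b :: t => by
      have ih := pw_ge w hw (b :: t)
      have h2 := hw a b
      simp only [pw_cons_cons, List.length_cons] at ih ⊢
      push_cast at ih ⊢
      linarith

lemma pw_eq_sum (w : Fin n → Fin n → ℝ) :
    ∀ (l : List (Fin n)) (m : ℕ) (hm : l.length = m + 1),
      pw w l = ∑ i : Fin m,
        w (l.get ⟨i, by omega⟩) (l.get ⟨i + 1, by omega⟩)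
  | [], m, hm => by simp at hm
  | [a], m, hm => by
      simp at hm; subst hm; simp
  | a :: b :: t, m, hm => by
      simp at hm
      subst hm
      rw [Fin.sum_univ_succ]
      have ih := pw_eq_sum w (b :: t) t.length rfl
      simp only [pw_cons_cons, ih]
      congr 1


/-- base weight: ascents get -1, descents +1 -/
def w0 : Fin n → Fin n → ℝ := fun u v => if u < v then -1 else 1

/-- the sum of weights around any cycle of a semiacyclic tournament is ≥ 1 -/
lemma cycle_sum_ge (R : Fin n → Fin n → Prop) (htour : IsTournament R)
    (hsemi : Semiacyclic R) (m : ℕ) (hm : 1 ≤ m) (c : Fin (m + 1) → Fin n)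
    (hc : IsCycle R c) :
    (1 : ℝ) ≤ ∑ i : Fin (m + 1), w0 (c i) (c (i + 1)) := by
  have hne : ∀ i : Fin (m + 1), c i ≠ c (i + 1) := by
    intro i h
    have h2 : i = i + 1 := hc.1 h
    have h01 : (0 : Fin (m + 1)) = 1 := by
      have : i + 0 = i + 1 := by rw [add_zero]; exact h2
      exact add_left_cancel this
    have hval := congrArg Fin.val h01
    have hv1 : (1 : Fin (m + 1)).val = 1 % (m + 1) := rfl
    have hv0 : (0 : Fin (m + 1)).val = 0 := rfl
    rw [hv0, hv1] at hval
    rw [Nat.mod_eq_of_lt (by omega)] at hval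
    omega
  have hasc := hsemi m c hc
  rw [IsAscendingCycle] at hasc
  push_neg at hasc
  set A := univ.filter (fun i : Fin (m + 1) => c i < c (i + 1)) with hA
  set D := univ.filter (fun i : Fin (m + 1) => c (i + 1) < c i) with hD
  have hfilter : univ.filter (fun i : Fin (m+1) => ¬ c i < c (i + 1)) = D := by
    ext i
    simp only [hD, mem_filter, mem_univ, true_and]
    constructor
    · intro h; exact lt_of_le_of_ne (not_lt.1 h) (hne i).symm
    · intro h; exact not_lt.2 h.le
  have hsum : ∑ i : Fin (m + 1), w0 (c i) (c (i + 1))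
      = A.card * (-1 : ℝ) + D.card * 1 := by
    rw [show (∑ i : Fin (m + 1), w0 (c i) (c (i + 1)))
        = ∑ i : Fin (m+1), (if c i < c (i+1) then (-1:ℝ) else 1) from rfl,
      Finset.sum_ite, Finset.sum_const, Finset.sum_const, hfilter]
    simp [hA]
  rw [hsum]
  have : A.card + 1 ≤ D.card := hasc
  have := (Nat.cast_le (α := ℝ)).2 this
  push_cast at this
  linarith

/-- cycle lemma in list form -/
lemma cycle_list_ge (R : Fin n → Fin n → Prop) (htour : IsTournament R)
    (hsemi : Semiacyclic R) (M : List (Fin n)) (u v : Fin n)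
    (hch : M.Chain' R) (hnd : M.Nodup) (hhead : M.head? = some v)
    (hlast : M.getLast? = some u) (harc : R u v) :
    1 ≤ pw w0 M + w0 u v := by
  have hMne : M ≠ [] := by rintro rfl; simp at hhead
  obtain ⟨m, hm⟩ : ∃ m, M.length = m + 1 := by
    cases M with
    | nil => exact absurd rfl hMne
    | cons a t => exact ⟨t.length, rfl⟩
  rcases Nat.eq_zero_or_pos m with rfl | hm1
  · -- singleton: u = v, contradicts irreflexivity
    obtain ⟨a, rfl⟩ := List.length_eq_one_iff.1 hm
    simp at hhead hlast
    subst hhead; subst hlast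
    exact absurd harc (htour.1 _)
  · have hc_eq : ∀ (c : Fin (m+1) → Fin n), (c = fun i => M.get ⟨i.val, by omega⟩) → True := fun _ _ => trivial
    let c : Fin (m + 1) → Fin n := fun i => M.get ⟨i.val, by omega⟩
    have hcg : ∀ (i : ℕ) (h : i < m + 1) (h' : i < M.length), c ⟨i, h⟩ = M.get ⟨i, h'⟩ :=
      fun _ _ _ => rfl
    have hclast : c (Fin.last m) = u := by
      rw [List.getLast?_eq_getLast hMne] at hlast
      rw [Option.some_inj] at hlast
      have h2 : M.getLast hMne = M.get ⟨M.length - 1, by omega⟩ := List.getLast_eq_getElem hMne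
      have h3 : (⟨M.length - 1, by omega⟩ : Fin M.length) = ⟨m, by omega⟩ := Fin.ext (show M.length - 1 = m by omega)
      rw [h3] at h2
      rw [← hlast, h2]
      exact hcg m (by omega) (by omega)
    have hc0 : c 0 = v := by
      rw [List.head?_eq_head hMne, Option.some_inj] at hhead
      have hv : M.head hMne = M.get ⟨0, by omega⟩ := by
        cases M with
        | nil => exact absurd rfl hMne
        | cons a t => rfl
      rw [← hhead, hv]
      have h0 : (0 : Fin (m+1)).val = 0 := rfl
      exact hcg 0 (by omega) (by omega)
    have hinj : Function.Injective c := by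
      intro i j h
      have h1 : M.get ⟨i.val, by omega⟩ = M.get ⟨j.val, by omega⟩ := h
      have h4 := List.nodup_iff_injective_get.1 hnd h1
      have h5 := congrArg Fin.val h4
      exact Fin.ext h5
    have hsucc : ∀ (i : Fin (m+1)) (h : i.val < m), i + 1 = (⟨i.val + 1, by omega⟩ : Fin (m+1)) := by
      intro i h
      apply Fin.ext
      rw [Fin.val_add_one_of_lt]
      exact Fin.lt_iff_val_lt_val.2 (by simp [Fin.last]; omega)
    have harcs : ∀ i : Fin (m + 1), R (c i) (c (i + 1)) := by
      intro i
      rcases Nat.lt_or_ge i.val m with h | h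
      · have e1 : c i = M.get ⟨i.val, by omega⟩ := rfl
        have e2 : c (i + 1) = M.get ⟨i.val + 1, by omega⟩ := by
          rw [hsucc i h]
        rw [e1, e2]
        exact List.isChain_iff_getElem.1 hch i.val (by omega)
      · have hi : i = Fin.last m := Fin.ext (by have := i.isLt; simp [Fin.last]; omega)
        rw [hi, Fin.last_add_one, hclast, hc0]
        exact harc
    have hsum := cycle_sum_ge R htour hsemi m hm1 c ⟨hinj, harcs⟩
    have hsplit : ∑ i : Fin (m + 1), w0 (c i) (c (i + 1))
        = (∑ i : Fin m, w0 (c i.castSucc) (c (i.castSucc + 1))) + w0 u v := by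
      rw [Fin.sum_univ_castSucc]
      congr 1
      rw [hclast]
      congr 1
      rw [Fin.last_add_one, hc0]
    have hpw : pw w0 M = ∑ i : Fin m, w0 (c i.castSucc) (c (i.castSucc + 1)) := by
      rw [pw_eq_sum w0 M m hm]
      apply Finset.sum_congr rfl
      intro i _
      have e1 : c i.castSucc = M.get ⟨i.val, by omega⟩ := rfl
      have e2 : c (i.castSucc + 1) = M.get ⟨i.val + 1, by omega⟩ := by
        rw [hsucc i.castSucc (by simpa using i.isLt)]
        rfl
      rw [e1, e2]
    rw [hpw, ← hsplit]
    exact hsum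


noncomputable def eps (n : ℕ) : ℝ := 1 / (n + 1)

lemma eps_pos : 0 < eps n := by unfold eps; positivity

lemma eps_le_one : eps n ≤ 1 := by
  unfold eps
  rw [div_le_one (by positivity)]
  linarith [Nat.cast_nonneg (α := ℝ) n]

lemma n_eps_lt_one : (n : ℝ) * eps n < 1 := by
  unfold eps
  rw [mul_one_div, div_lt_one (by positivity)]
  linarith

noncomputable def we (n : ℕ) : Fin n → Fin n → ℝ := fun u v => w0 u v - eps n

lemma we_eq : we n = fun u v => w0 u v - eps n := rfl

lemma w0_bound (u v : Fin n) : -1 ≤ w0 u v ∧ w0 u v ≤ 1 := by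
  unfold w0; split <;> norm_num

lemma we_ge (u v : Fin n) : -2 ≤ we n u v := by
  have h1 := (w0_bound u v).1
  have h2 := eps_le_one (n := n)
  unfold we; linarith

def PathsTo (R : Fin n → Fin n → Prop) (v : Fin n) : Set (List (Fin n)) :=
  {l | l.Chain' R ∧ l.Nodup ∧ l.getLast? = some v}

lemma pathsTo_finite (R : Fin n → Fin n → Prop) (v : Fin n) : (PathsTo R v).Finite := by
  apply (List.finite_length_le (Fin n) n).subset
  intro l hl
  have := hl.2.1.length_le_card
  simpa using this

lemma singleton_mem_pathsTo (R : Fin n → Fin n → Prop) (v : Fin n) : [v] ∈ PathsTo R v := by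
  refine ⟨by constructor, by simp, by simp⟩

noncomputable def pot (R : Fin n → Fin n → Prop) (v : Fin n) : ℝ :=
  sInf (pw (we n) '' PathsTo R v)

lemma pot_le (R : Fin n → Fin n → Prop) (v : Fin n) {l : List (Fin n)}
    (hl : l ∈ PathsTo R v) : pot R v ≤ pw (we n) l :=
  csInf_le (((pathsTo_finite R v).image _).bddBelow) ⟨l, hl, rfl⟩

lemma pot_attained (R : Fin n → Fin n → Prop) (v : Fin n) :
    ∃ l ∈ PathsTo R v, pw (we n) l = pot R v := by
  have h1 : (pw (we n) '' PathsTo R v).Nonempty :=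
    ⟨_, ⟨[v], singleton_mem_pathsTo R v, rfl⟩⟩
  have h2 := h1.csInf_mem ((pathsTo_finite R v).image _)
  obtain ⟨l, hl, he⟩ := h2
  exact ⟨l, hl, he⟩

lemma pot_nonpos (R : Fin n → Fin n → Prop) (v : Fin n) : pot R v ≤ 0 := by
  have := pot_le R v (singleton_mem_pathsTo R v)
  simpa [pw] using this

lemma pot_ge (R : Fin n → Fin n → Prop) (v : Fin n) : -(2 * n) ≤ pot R v := by
  obtain ⟨l, hl, he⟩ := pot_attained R v
  rw [← he]
  have h1 := pw_ge (we n) (fun a b => we_ge a b) l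
  have h2 : l.length ≤ n := by simpa using hl.2.1.length_le_card
  have h3 : (l.length : ℝ) ≤ n := by exact_mod_cast h2
  linarith

lemma pot_constraint (R : Fin n → Fin n → Prop) (htour : IsTournament R)
    (hsemi : Semiacyclic R) (u v : Fin n) (h : R u v) :
    pot R v ≤ pot R u + we n u v := by
  obtain ⟨l, hl, he⟩ := pot_attained R u
  by_cases hv : v ∈ l
  · obtain ⟨A, B, rfl⟩ := List.append_of_mem hv
    have hpre : (A ++ [v]) <+: (A ++ v :: B) := ⟨B, by simp⟩
    have hP : (A ++ [v]) ∈ PathsTo R v := by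
      refine ⟨hl.1.prefix hpre, hl.2.1.sublist hpre.sublist, List.getLast?_concat⟩
    have hyv : pot R v ≤ pw (we n) (A ++ [v]) := pot_le R v hP
    have hsuf : (v :: B) <:+ (A ++ v :: B) := ⟨A, rfl⟩
    have hlastB : (v :: B).getLast? = some u := by
      have := hl.2.2
      rwa [List.getLast?_append_cons] at this
    have hcyc := cycle_list_ge R htour hsemi (v :: B) u v
      (hl.1.suffix hsuf) (hl.2.1.sublist hsuf.sublist) rfl hlastB h
    have hsp := pw_split (we n) A v B
    have hsh : pw (we n) (v :: B) = pw w0 (v :: B) - ((v :: B).length - 1 : ℕ) * eps n := by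
      rw [we_eq]; exact pw_shift w0 (eps n) (v :: B)
    have hlen : (v :: B).length ≤ n := by
      simpa using (hl.2.1.sublist hsuf.sublist).length_le_card
    have hlen' : (((v :: B).length - 1 : ℕ) : ℝ) * eps n ≤ (n : ℝ) * eps n := by
      apply mul_le_mul_of_nonneg_right _ eps_pos.le
      exact_mod_cast Nat.le_trans (Nat.sub_le _ _) hlen
    have hwe : we n u v = w0 u v - eps n := rfl
    have heps := n_eps_lt_one (n := n)
    have heps' := eps_pos (n := n)
    -- pw (we n) (v::B) + we n u v ≥ 1 - ((len-1)+1) eps ≥ 1 - n*eps - eps... 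
    -- combine
    have key : 0 ≤ pw (we n) (v :: B) + we n u v - (1 - ((((v :: B).length - 1 : ℕ) : ℝ) + 1) * eps n) := by
      rw [hsh, hwe]; linarith
    have hlen2 : ((((v :: B).length - 1 : ℕ) : ℝ) + 1) * eps n ≤ (n : ℝ) * eps n := by
      apply mul_le_mul_of_nonneg_right _ eps_pos.le
      have : ((v :: B).length - 1 : ℕ) + 1 ≤ n := by simp at hlen ⊢; omega
      exact_mod_cast this
    have hpos : 0 ≤ pw (we n) (v :: B) + we n u v := by linarith
    calc pot R v ≤ pw (we n) (A ++ [v]) := hyv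
      _ = pw (we n) (A ++ v :: B) - pw (we n) (v :: B) := by rw [hsp]; ring
      _ ≤ pw (we n) (A ++ v :: B) + we n u v := by linarith
      _ = pot R u + we n u v := by rw [he]
  · have hP : (l ++ [v]) ∈ PathsTo R v := by
      refine ⟨?_, ?_, List.getLast?_concat⟩
      · show List.IsChain R (l ++ [v]); rw [List.isChain_append]
        refine ⟨hl.1, by simp, ?_⟩
        intro x hx y hy
        rw [hl.2.2] at hx
        simp at hx hy
        rw [← hx, ← hy]; exact h
      · rw [List.nodup_append]
        exact ⟨hl.2.1, by simp, by simpa using fun a ha (hav : a = v) => hv (hav ▸ ha)⟩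
    have := pot_le R v hP
    rw [pw_concat (we n) v l u hl.2.2, he] at this
    exact this


lemma dom_pair {A A' B x x' : ℝ} (h1 : A < A') (h2 : A' < B) (hx : 1 < x) (hx' : 1 < x') :
    (Dominates A B x A' B x' ↔ 1 + x' < x) ∧ (Dominates A' B x' A B x ↔ x < 1 + x') := by
  have hA : A < B := h1.trans h2
  have hx0 : (0 : ℝ) < 1 + x := by linarith
  have hx'0 : (0 : ℝ) < 1 + x' := by linarith
  have e1 : winProb A B x A' B x' = x / ((1 + x) * (1 + x')) := by
    unfold winProb
    rw [if_neg (by linarith), if_neg (by linarith), if_pos h2, if_neg (lt_irrefl B)]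
    field_simp
    ring
  have e2 : winProb A' B x' A B x = 1 / (1 + x) := by
    unfold winProb
    rw [if_pos h1, if_neg (by linarith), if_pos hA, if_neg (lt_irrefl B)]
    field_simp
    ring
  constructor
  · rw [Dominates, e1, e2, div_lt_div_iff₀ hx0 (by positivity)]
    rw [show (1 : ℝ) * ((1 + x) * (1 + x')) = (1 + x) * (1 + x') by ring,
      show x * (1 + x) = (1 + x) * x by ring]
    exact mul_lt_mul_iff_right₀ hx0
  · rw [Dominates, e1, e2, div_lt_div_iff₀ (by positivity) hx0]
    rw [show (1 : ℝ) * ((1 + x) * (1 + x')) = (1 + x) * (1 + x') by ring,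
      show x * (1 + x) = (1 + x) * x by ring]
    exact mul_lt_mul_iff_right₀ hx0


end Stmt7A

open Stmt7A in
/-- Every semiacyclic tournament is the dominance graph of a set of winner coins. -/
theorem stmt7 {n : ℕ} (R : Fin n → Fin n → Prop)
    (htour : IsTournament R) (hsemi : Semiacyclic R) :
    ∃ a b x : Fin n → ℝ,
      (∀ i, a i < b i ∧ 1 < x i) ∧
      ∀ i j : Fin n, i ≠ j →
        (Dominates (a i) (b i) (x i) (a j) (b j) (x j) ↔ R i j) := by
  refine ⟨fun i => (i.val : ℝ), fun _ => (n : ℝ), fun i => pot R i + (2 * n + 2), ?_, ?_⟩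
  · intro i
    dsimp only
    constructor
    · exact_mod_cast i.isLt
    · have := pot_ge R i
      linarith
  · intro i j hij
    dsimp only
    have hxi : 1 < pot R i + (2 * n + 2) := by have := pot_ge R i; linarith
    have hxj : 1 < pot R j + (2 * n + 2) := by have := pot_ge R j; linarith
    have heps := eps_pos (n := n)
    rcases lt_or_gt_of_ne hij with hlt | hlt
    · -- i < j
      have hAA : (i.val : ℝ) < (j.val : ℝ) := by exact_mod_cast hlt
      have hAB : (j.val : ℝ) < (n : ℝ) := by exact_mod_cast j.isLt
      obtain ⟨d1, _⟩ := dom_pair hAA hAB hxi hxj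
      rw [d1]
      by_cases hR : R i j
      · have hc := pot_constraint R htour hsemi i j hR
        have hw : we n i j = -1 - eps n := by
          simp only [we, w0, if_pos hlt]
        rw [hw] at hc
        exact iff_of_true (by linarith) hR
      · have hR' : R j i := by
          by_contra hR2
          exact hR ((htour.2 i j hij).2 hR2)
        have hc := pot_constraint R htour hsemi j i hR'
        have hw : we n j i = 1 - eps n := by
          simp only [we, w0, if_neg (asymm hlt)]
        rw [hw] at hc
        exact iff_of_false (by linarith) hR
    · -- j < i
      have hAA : (j.val : ℝ) < (i.val : ℝ) := by exact_mod_cast hlt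
      have hAB : (i.val : ℝ) < (n : ℝ) := by exact_mod_cast i.isLt
      obtain ⟨_, d2⟩ := dom_pair hAA hAB hxj hxi
      rw [d2]
      by_cases hR : R i j
      · have hc := pot_constraint R htour hsemi i j hR
        have hw : we n i j = 1 - eps n := by
          simp only [we, w0, if_neg (asymm hlt)]
        rw [hw] at hc
        exact iff_of_true (by linarith) hR
      · have hR' : R j i := by
          by_contra hR2
          exact hR ((htour.2 i j hij).2 hR2)
        have hc := pot_constraint R htour hsemi j i hR'
        have hw : we n j i = -1 - eps n := by
          simp only [we, w0, if_pos hlt]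
        rw [hw] at hc
        exact iff_of_false (by linarith) hR
end

section
/- Let c_1, …, c_n be coins with types (a_i, b_i, x_i) satisfying a_i ≤ b_i and x_i ≥ 1 for all i (i.e., the set contains no loser coins), and suppose their dominance graph is a tournament T on {1,…,n}. Then T is also the dominance graph of a set of n winner coins that all have the same number on one of their sides; that is, there exist coins c'_1, …, c'_n with types (a'_i, b'_i, x'_i) satisfying a'_i < b'_i, x'_i > 1, and b'_1 = b'_2 = … = b'_n, whose dominance graph is exactly T. -/
open Finset

noncomputable def sg (u v : ℝ) : ℝ :=
  (if v < u then (1:ℝ) else 0) - (if u < v then (1:ℝ) else 0)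

noncomputable def Ediff (a₁ b₁ x₁ a₂ b₂ x₂ : ℝ) : ℝ :=
  sg a₁ a₂ + x₂ * sg a₁ b₂ + x₁ * sg b₁ a₂ + x₁ * x₂ * sg b₁ b₂

lemma sg_le_one (u v : ℝ) : sg u v ≤ 1 := by
  unfold sg; split_ifs <;> norm_num

lemma neg_one_le_sg (u v : ℝ) : -1 ≤ sg u v := by
  unfold sg; split_ifs <;> norm_num

lemma sg_self (u : ℝ) : sg u u = 0 := by
  simp [sg]

lemma sg_antisymm (u v : ℝ) : sg u v = - sg v u := by
  unfold sg; ring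

lemma sg_of_lt {u v : ℝ} (h : u < v) : sg u v = -1 := by
  simp [sg, h, asymm h]

lemma sg_of_gt {u v : ℝ} (h : v < u) : sg u v = 1 := by
  simp [sg, h, asymm h]

lemma winProb_sub (a₁ b₁ x₁ a₂ b₂ x₂ : ℝ) (h₁ : 0 < x₁) (h₂ : 0 < x₂) :
    winProb a₁ b₁ x₁ a₂ b₂ x₂ - winProb a₂ b₂ x₂ a₁ b₁ x₁
      = (1 / ((1 + x₁) * (1 + x₂))) * Ediff a₁ b₁ x₁ a₂ b₂ x₂ := by
  have d₁ : (1 : ℝ) + x₁ ≠ 0 := by linarith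
  have d₂ : (1 : ℝ) + x₂ ≠ 0 := by linarith
  unfold winProb Ediff sg
  generalize (if a₂ < a₁ then (1:ℝ) else 0) = A1
  generalize (if a₁ < a₂ then (1:ℝ) else 0) = A2
  generalize (if b₂ < a₁ then (1:ℝ) else 0) = B1
  generalize (if a₁ < b₂ then (1:ℝ) else 0) = B2
  generalize (if a₂ < b₁ then (1:ℝ) else 0) = C1
  generalize (if b₁ < a₂ then (1:ℝ) else 0) = C2
  generalize (if b₂ < b₁ then (1:ℝ) else 0) = D1
  generalize (if b₁ < b₂ then (1:ℝ) else 0) = D2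
  field_simp
  ring

lemma dominates_iff (a₁ b₁ x₁ a₂ b₂ x₂ : ℝ) (h₁ : 0 < x₁) (h₂ : 0 < x₂) :
    Dominates a₁ b₁ x₁ a₂ b₂ x₂ ↔ 0 < Ediff a₁ b₁ x₁ a₂ b₂ x₂ := by
  have hc : (0:ℝ) < 1 / ((1 + x₁) * (1 + x₂)) := by positivity
  unfold Dominates
  rw [← sub_pos, winProb_sub _ _ _ _ _ _ h₁ h₂]
  constructor
  · intro h
    by_contra hE
    push_neg at hE
    nlinarith
  · intro h
    exact mul_pos hc h

lemma E_nonpos_of_blt {a₁ b₁ x₁ a₂ b₂ x₂ : ℝ} (ha₁ : a₁ ≤ b₁) (ha₂ : a₂ ≤ b₂)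
    (hx₁ : 0 < x₁) (hx₂ : 1 ≤ x₂) (hb : b₁ < b₂) :
    Ediff a₁ b₁ x₁ a₂ b₂ x₂ ≤ 0 := by
  have h1 : sg a₁ b₂ = -1 := sg_of_lt (lt_of_le_of_lt ha₁ hb)
  have h2 : sg b₁ b₂ = -1 := sg_of_lt hb
  have h3 : sg a₁ a₂ ≤ 1 := sg_le_one _ _
  have h4 : sg b₁ a₂ ≤ 1 := sg_le_one _ _
  unfold Ediff
  rw [h1, h2]
  nlinarith [mul_le_mul_of_nonneg_left h4 hx₁.le]

lemma E_const_beats {a₁ b₁ x₁ a₂ b₂ x₂ : ℝ} (hb : b₁ = b₂) (h₁ : a₁ < b₁)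
    (h₂ : a₂ = b₂) (hx₂ : 0 ≤ x₂) :
    Ediff a₁ b₁ x₁ a₂ b₂ x₂ ≤ 0 := by
  subst hb; subst h₂
  unfold Ediff
  simp only [sg_of_lt h₁, sg_self]
  nlinarith

lemma E_const_const {a₁ b₁ x₁ a₂ b₂ x₂ : ℝ} (hb : b₁ = b₂) (h₁ : a₁ = b₁)
    (h₂ : a₂ = b₂) : Ediff a₁ b₁ x₁ a₂ b₂ x₂ = 0 := by
  subst hb; subst h₁; subst h₂
  unfold Ediff
  rw [sg_self]
  ring

lemma E_same_b {a₁ b₁ x₁ a₂ b₂ x₂ : ℝ} (hb : b₁ = b₂) (h₁ : a₁ < b₁) (h₂ : a₂ < b₂) :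
    Ediff a₁ b₁ x₁ a₂ b₂ x₂ = x₁ - x₂ + sg a₁ a₂ := by
  subst hb
  unfold Ediff
  rw [sg_of_lt h₁, sg_of_gt h₂, sg_self]
  ring

/-- If a set of coins contains no loser coins and its dominance graph is a
tournament, then this tournament is also the dominance graph of a set of winner
coins that all have the same number on one of their sides. -/
theorem stmt8 {n : ℕ} (a b x : Fin n → ℝ)
    (hcoin : ∀ i, a i ≤ b i ∧ 1 ≤ x i)
    (htour : IsTournament
      (fun i j : Fin n => Dominates (a i) (b i) (x i) (a j) (b j) (x j))) :
    ∃ a' b' x' : Fin n → ℝ,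
      (∀ i, a' i < b' i ∧ 1 < x' i) ∧
      (∀ i j : Fin n, b' i = b' j) ∧
      ∀ i j : Fin n,
        (Dominates (a' i) (b' i) (x' i) (a' j) (b' j) (x' j) ↔
          Dominates (a i) (b i) (x i) (a j) (b j) (x j)) := by
  classical
  obtain ⟨hirr, hcomp⟩ := htour
  have hab : ∀ i, a i ≤ b i := fun i => (hcoin i).1
  have hx1 : ∀ i, 1 ≤ x i := fun i => (hcoin i).2
  set Sb : ℝ := ∑ i, |b i| with hSb
  set B : ℝ := Sb + 1 with hBdef
  set K : ℝ := (∑ i, |x i|) + 2 with hKdef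
  have hbS : ∀ i, b i ≤ Sb := by
    intro i
    rw [hSb]
    exact le_trans (le_abs_self _)
      (Finset.single_le_sum (fun j _ => abs_nonneg (b j)) (mem_univ i))
  have hxS : ∀ i, x i ≤ K - 2 := by
    intro i
    rw [hKdef]
    have h1 : |x i| ≤ ∑ j, |x j| :=
      Finset.single_le_sum (fun j _ => abs_nonneg (x j)) (mem_univ i)
    have h2 := le_abs_self (x i)
    linarith
  have hKpos : (0:ℝ) < K := by
    have : (0:ℝ) ≤ ∑ i, |x i| := Finset.sum_nonneg fun j _ => abs_nonneg _
    rw [hKdef]; linarith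
  set keyLt : Fin n → Fin n → Prop :=
    fun i j => b i < b j ∨ (b i = b j ∧ a i < b i ∧ a j = b j) with hkeyLt
  set r : Fin n → ℕ := fun i => (univ.filter (fun k => keyLt k i)).card with hrdef
  set a' : Fin n → ℝ := fun i => if a i = b i then b i - 1 else a i with ha'def
  set x' : Fin n → ℝ := fun i => x i + 2 + K * (r i : ℝ) with hx'def
  -- basic properties
  have ha'B : ∀ i, a' i < B := by
    intro i
    rw [ha'def]
    by_cases h : a i = b i <;> simp only [h, if_true, if_false, if_pos, if_neg]
    · have := hbS i; rw [hBdef]; simp [h]; linarith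
    · have h2 : a i < b i := lt_of_le_of_ne (hab i) h
      have := hbS i; rw [hBdef]; simp [h]; linarith
  have hx'1 : ∀ i, 1 < x' i := by
    intro i
    have : (0:ℝ) ≤ K * (r i : ℝ) := mul_nonneg hKpos.le (Nat.cast_nonneg _)
    rw [hx'def]; have := hx1 i; simp only []; linarith
  -- rank monotonicity
  have hkey_irrefl : ∀ i, ¬ keyLt i i := by
    intro i h
    rw [hkeyLt] at h
    rcases h with h | ⟨_, h2, h3⟩
    · exact lt_irrefl _ h
    · exact absurd h3 (ne_of_lt h2)
  have hkey_trans : ∀ k j i, keyLt k j → keyLt j i → keyLt k i := by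
    intro k j i h1 h2
    rw [hkeyLt] at h1 h2 ⊢
    rcases h1 with h1 | ⟨e1, f1, g1⟩
    · rcases h2 with h2 | ⟨e2, _, _⟩
      · exact Or.inl (h1.trans h2)
      · exact Or.inl (e2 ▸ h1)
    · rcases h2 with h2 | ⟨e2, f2, g2⟩
      · exact Or.inl (e1 ▸ h2)
      · exact absurd g1 (ne_of_lt f2)
  have hrlt : ∀ i j, keyLt i j → r i < r j := by
    intro i j hij
    rw [hrdef]
    apply Finset.card_lt_card
    constructor
    · intro k hk
      simp only [Finset.mem_filter, Finset.mem_univ, true_and] at hk ⊢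
      exact hkey_trans k i j hk hij
    · intro hcon
      have : i ∈ univ.filter (fun k => keyLt k j) := by
        simp only [Finset.mem_filter, Finset.mem_univ, true_and]; exact hij
      have := hcon this
      simp only [Finset.mem_filter, Finset.mem_univ, true_and] at this
      exact hkey_irrefl i this
  have hreq : ∀ i j, b i = b j → (a i = b i ↔ a j = b j) → r i = r j := by
    intro i j hb hc
    show (univ.filter (fun k => keyLt k i)).card = (univ.filter (fun k => keyLt k j)).card
    apply congrArg Finset.card
    apply Finset.filter_congr
    intro k _
    rw [hb] at hc
    rw [hkeyLt]
    simp only [hb]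
    constructor
    · rintro (h | ⟨e, f, g⟩)
      · exact Or.inl h
      · exact Or.inr ⟨e, f, hc.mp g⟩
    · rintro (h | ⟨e, f, g⟩)
      · exact Or.inl h
      · exact Or.inr ⟨e, f, hc.mpr g⟩
  -- characterization of new dominance
  have hx'pos : ∀ i, 0 < x' i := fun i => lt_trans one_pos (hx'1 i)
  have hnew : ∀ i j, Dominates (a' i) B (x' i) (a' j) B (x' j) ↔
      0 < x' i - x' j + sg (a' i) (a' j) := by
    intro i j
    rw [dominates_iff _ _ _ _ _ _ (hx'pos i) (hx'pos j),
      E_same_b rfl (ha'B i) (ha'B j)]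
  -- the big-gap argument
  have hbig : ∀ i j, keyLt j i → 0 < x' i - x' j + sg (a' i) (a' j) := by
    intro i j h
    have hr := hrlt j i h
    have hcast : (r j : ℝ) + 1 ≤ (r i : ℝ) := by exact_mod_cast hr
    have hK2 : K ≤ K * ((r i : ℝ) - (r j : ℝ)) := by nlinarith
    have h1 := hxS j
    have h2 := hx1 i
    have h3 := neg_one_le_sg (a' i) (a' j)
    rw [hx'def]
    simp only []
    nlinarith
  -- forward implication
  have hfwd : ∀ i j, Dominates (a i) (b i) (x i) (a j) (b j) (x j) →
      0 < x' i - x' j + sg (a' i) (a' j) := by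
    intro i j hdom
    have hxi : (0:ℝ) < x i := lt_of_lt_of_le one_pos (hx1 i)
    have hxj : (0:ℝ) < x j := lt_of_lt_of_le one_pos (hx1 j)
    have hE := (dominates_iff _ _ _ _ _ _ hxi hxj).mp hdom
    rcases lt_trichotomy (b i) (b j) with hb | hb | hb
    · have := E_nonpos_of_blt (hab i) (hab j) hxi (hx1 j) hb
      linarith
    · by_cases hci : a i = b i <;> by_cases hcj : a j = b j
      · have := E_const_const (x₁ := x i) (x₂ := x j) hb hci hcj; linarith
      · -- i const, j not: keyLt j i
        have hjlt : a j < b j := lt_of_le_of_ne (hab j) hcj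
        exact hbig i j (Or.inr ⟨hb.symm, hjlt, hci⟩)
      · -- i nonconst, j const
        have hilt : a i < b i := lt_of_le_of_ne (hab i) hci
        have := E_const_beats (x₁ := x i) hb hilt hcj hxj.le
        linarith
      · -- both nonconst, same b
        have hilt : a i < b i := lt_of_le_of_ne (hab i) hci
        have hjlt : a j < b j := lt_of_le_of_ne (hab j) hcj
        have hEval := E_same_b hb hilt hjlt (x₁ := x i) (x₂ := x j)
        have hre : r i = r j := hreq i j hb (by simp [hci, hcj])
        have ha'i : a' i = a i := by rw [ha'def]; simp [hci]
        have ha'j : a' j = a j := by rw [ha'def]; simp [hcj]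
        have hx'e : x' i - x' j = x i - x j := by
          rw [hx'def]; simp only []; rw [hre]; ring
        rw [ha'i, ha'j, hx'e]
        rw [hEval] at hE
        linarith
    · exact hbig i j (Or.inl hb)
  -- asymmetry of new dominance values
  have hasym : ∀ i j, 0 < x' i - x' j + sg (a' i) (a' j) →
      0 < x' j - x' i + sg (a' j) (a' i) → False := by
    intro i j h1 h2
    have := sg_antisymm (a' i) (a' j)
    linarith
  refine ⟨a', fun _ => B, x', fun i => ⟨ha'B i, hx'1 i⟩, fun _ _ => rfl, ?_⟩
  intro i j
  rw [hnew i j]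
  constructor
  · intro hΔ
    by_cases hij : i = j
    · subst hij
      rw [sg_self] at hΔ
      exact absurd hΔ (by linarith)
    · by_contra hnd
      have hji : Dominates (a j) (b j) (x j) (a i) (b i) (x i) :=
        ((hcomp j i (Ne.symm hij)).mpr hnd)
      exact hasym i j hΔ (hfwd j i hji)
  · exact hfwd i j
end

section
/- Let (a_i,b_i,x_i) and (a_j,b_j,x_j) be coin types with a_i ≤ b_i, a_j ≤ b_j, x_j > 0 and 0 < x_i ≤ 1. If the coin (a_i,b_i,x_i) dominates the coin (a_j,b_j,x_j), then a_i ≥ a_j. -/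
open Finset

/-- If coin `i` dominates coin `j` and coin `i` is not a winner coin,
then `a i ≥ a j`. -/
theorem stmt9 (ai bi xi aj bj xj : ℝ) (hi : ai ≤ bi) (hj : aj ≤ bj)
    (hxi : 0 < xi) (hxi' : xi ≤ 1) (hxj : 0 < xj)
    (hdom : Dominates ai bi xi aj bj xj) : aj ≤ ai := by
  by_contra h
  push_neg at h
  unfold Dominates winProb at hdom
  have hxi1 : (0:ℝ) < 1 + xi := by linarith
  have hxj1 : (0:ℝ) < 1 + xj := by linarith
  rw [if_neg (not_lt.2 h.le), if_neg (not_lt.2 (h.le.trans hj)), if_pos h,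
    if_pos (lt_of_lt_of_le h hj)] at hdom
  have bnd : ∀ (P : Prop) [Decidable P],
      (0:ℝ) ≤ (if P then 1 else 0) ∧ (if P then (1:ℝ) else 0) ≤ 1 := by
    intro P _; split <;> norm_num
  obtain ⟨c1, d1⟩ := bnd (bi < aj)
  obtain ⟨c2, d2⟩ := bnd (bi < bj)
  obtain ⟨c3, d3⟩ := bnd (aj < bi)
  obtain ⟨c4, d4⟩ := bnd (bj < bi)
  set I1 : ℝ := if bi < aj then 1 else 0
  set I2 : ℝ := if bi < bj then 1 else 0
  set I3 : ℝ := if aj < bi then 1 else 0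
  set I4 : ℝ := if bj < bi then 1 else 0
  set u : ℝ := 1 / (1 + xi) with hu
  set v : ℝ := xi / (1 + xi) with hv
  set u' : ℝ := 1 / (1 + xj) with hu'
  set v' : ℝ := xj / (1 + xj) with hv'
  have hupos : 0 < u := by positivity
  have hvpos : 0 < v := by positivity
  have hu'pos : 0 < u' := by positivity
  have hv'pos : 0 < v' := by positivity
  have hsum : u + v = 1 := by rw [hu, hv]; field_simp
  have hsum' : u' + v' = 1 := by rw [hu', hv']; field_simp
  have hvu : v ≤ u := by
    rw [hu, hv]
    exact div_le_div_of_nonneg_right hxi' hxi1.le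
  nlinarith [mul_nonneg (mul_pos hvpos hu'pos).le (sub_nonneg.2 d3),
    mul_nonneg (mul_pos hvpos hv'pos).le (sub_nonneg.2 d4),
    mul_nonneg (mul_pos hu'pos hvpos).le c1,
    mul_nonneg (mul_pos hv'pos hvpos).le c2,
    mul_nonneg (sub_nonneg.2 hvu) (by linarith : (0:ℝ) ≤ u' + v')]
end

section
/- Every semiacyclic tournament T on {1, …, n} is the dominance graph of a set of n loser coins; that is, there exist coins c_1, …, c_n with types (a_i, b_i, x_i) satisfying a_i < b_i and 0 < x_i < 1 for all i, such that for all distinct i, j ∈ {1,…,n}, coin c_i dominates coin c_j if and only if i → j holds in T. -/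
open Finset

variable {n : ℕ}

noncomputable def cw (n : ℕ) (u v : Fin n) : ℝ :=
  if u < v then (2*n+3 : ℝ) else -(2*n+1)

noncomputable def wt : List (Fin n) → ℝ
  | [] => 0
  | [_] => 0
  | (a :: b :: t) => cw n a b + wt (b :: t)

lemma cw_le (u v : Fin n) : cw n u v ≤ 2*n+3 := by
  unfold cw; split <;> nlinarith [Nat.cast_nonneg (α := ℝ) n]

lemma wt_le (l : List (Fin n)) : wt l ≤ l.length * (2*n+3) := by
  induction l with
  | nil => simp [wt]
  | cons a t ih =>
    cases t with
    | nil => simp [wt]; positivity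
    | cons b t' =>
      have h1 : cw n a b ≤ 2*n+3 := cw_le a b
      simp only [wt, List.length_cons] at *
      push_cast at *
      nlinarith [ih]

lemma wt_append_cons (A : List (Fin n)) (x : Fin n) (B : List (Fin n)) :
    wt (A ++ x :: B) = wt (A ++ [x]) + wt (x :: B) := by
  induction A with
  | nil => cases B <;> simp [wt]
  | cons a A' ih =>
    cases A' with
    | nil => cases B <;> simp [wt] <;> ring
    | cons b A'' =>
      simp only [List.cons_append, wt, List.append_eq] at *
      rw [ih]; ring

lemma wt_append_single (A : List (Fin n)) (hA : A ≠ []) (x : Fin n) :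
    wt (A ++ [x]) = wt A + cw n (A.getLast hA) x := by
  induction A with
  | nil => simp at hA
  | cons a A' ih =>
    cases A' with
    | nil => simp [wt]
    | cons b A'' =>
      simp only [List.cons_append, wt, List.append_eq]
      rw [← List.cons_append, ih (by simp)]
      rw [List.getLast_cons_cons]
      ring

lemma wt_eq_sum (m : ℕ) : ∀ (l : List (Fin n)) (hm : l.length = m + 1),
    wt l = ∑ i : Fin m, cw n (l.get ⟨i.val, by rw [hm]; exact Nat.lt_succ_of_lt i.isLt⟩)
      (l.get ⟨i.val + 1, by rw [hm]; exact Nat.succ_lt_succ i.isLt⟩) := by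
  induction m with
  | zero =>
    intro l hm
    obtain ⟨a, rfl⟩ := List.length_eq_one_iff.mp hm
    simp [wt]
  | succ m ih =>
    intro l hm
    match l, hm with
    | a :: b :: t, hm =>
      have ht : (b :: t).length = m + 1 := by simpa using hm
      have := ih (b :: t) ht
      show cw n a b + wt (b :: t) = _
      rw [this, Fin.sum_univ_succ]
      congr 1

lemma cycle_neg (R : Fin n → Fin n → Prop) (htour : IsTournament R) (hsemi : Semiacyclic R)
    (l : List (Fin n)) (hne : l ≠ []) (hnd : l.Nodup) (hch : List.Chain' R l)
    (hclose : R (l.getLast hne) (l.head hne)) :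
    wt l + cw n (l.getLast hne) (l.head hne) < 0 := by
  classical
  have hlen : 0 < l.length := List.length_pos_iff.2 hne
  set m := l.length - 1 with hmdef
  have hm : l.length = m + 1 := by omega
  rcases Nat.eq_zero_or_pos m with hm0 | hmpos
  · obtain ⟨a, rfl⟩ := List.length_eq_one_iff.mp (by omega : l.length = 1)
    simp only [List.getLast_singleton, List.head_cons] at hclose
    exact absurd hclose (htour.1 a)
  have hval1 : ((1 : Fin (m+1)) : ℕ) = 1 := by
    rw [Fin.val_one']; exact Nat.mod_eq_of_lt (by omega)
  have hadd : ∀ i : Fin (m+1), ((i+1 : Fin (m+1)) : ℕ) = (i.val + 1) % (m+1) := by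
    intro i; rw [Fin.val_add, hval1]
  set f : Fin (m+1) → Fin n := fun i => l.get (Fin.cast hm.symm i) with hf
  have hinj : Function.Injective f :=
    (List.nodup_iff_injective_get.mp hnd).comp (Fin.cast_injective _)
  have hlast : f (Fin.last m) = l.getLast hne := by
    rw [List.getLast_eq_getElem, hf]
    rfl
  have hhead : f 0 = l.head hne := by
    rw [List.head_eq_getElem_zero]
    exact List.get_eq_getElem
  have hedge : ∀ i : Fin (m+1), R (f i) (f (i+1)) := by
    intro i
    by_cases hi : i.val < m
    · have h1 : ((i+1 : Fin (m+1)) : ℕ) = i.val + 1 := by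
        rw [hadd]; exact Nat.mod_eq_of_lt (by omega)
      have hchg := List.isChain_iff_getElem.mp hch i.val (by omega)
      have e2 : f (i+1) = l.get ⟨i.val+1, by omega⟩ := by
        show l.get (Fin.cast hm.symm (i+1)) = _
        congr 1
        exact Fin.ext (by simpa using h1)
      have e1 : f i = l.get ⟨i.val, by omega⟩ := rfl
      rw [e1, e2]; exact hchg
    · have hi' : i = Fin.last m := Fin.ext (by have := i.isLt; simp only [Fin.val_last]; omega)
      rw [hi', Fin.last_add_one, hlast, hhead]
      exact hclose
  have hnasc := hsemi m f ⟨hinj, hedge⟩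
  unfold IsAscendingCycle at hnasc
  push_neg at hnasc
  set A := (univ.filter (fun i : Fin (m+1) => f i < f (i+1))).card with hA
  set D := (univ.filter (fun i : Fin (m+1) => f (i+1) < f i)).card with hD
  have hne' : ∀ i : Fin (m+1), f i ≠ f (i+1) := by
    intro i heq
    have h2 : i = i + 1 := hinj heq
    have h0 : (0 : Fin (m+1)) = 1 := by
      have := congrArg (fun j => j - i) h2
      simpa [sub_self] using this
    have := congrArg Fin.val h0
    rw [hval1] at this
    simp at this
  have hfe : Finset.filter (fun i : Fin (m+1) => ¬ f i < f (i+1)) univ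
      = Finset.filter (fun i : Fin (m+1) => f (i+1) < f i) univ := by
    apply Finset.filter_congr
    intro i _
    constructor
    · intro h'; exact lt_of_le_of_ne (not_lt.mp h') (Ne.symm (hne' i))
    · intro h'; exact not_lt.mpr h'.le
  have hADsum : A + D = m + 1 := by
    have h := Finset.card_filter_add_card_filter_not
      (s := (univ : Finset (Fin (m+1)))) (p := fun i => f i < f (i + 1))
    rw [hfe] at h
    simpa using h
  have hcardle : m + 1 ≤ n := by
    have := Fintype.card_le_of_injective f hinj
    simpa using this
  have htot : ∑ i : Fin (m+1), cw n (f i) (f (i+1))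
      = A * (2*(n:ℝ)+3) + D * (-(2*(n:ℝ)+1)) := by
    have heq : ∀ i : Fin (m+1), cw n (f i) (f (i+1))
        = if f i < f (i+1) then (2*(n:ℝ)+3) else -(2*(n:ℝ)+1) := by
      intro i; rfl
    rw [Finset.sum_congr rfl (fun i _ => heq i), Finset.sum_ite, hfe,
      Finset.sum_const, Finset.sum_const, ← hA, ← hD]
    simp only [nsmul_eq_mul]
  have hsplit : ∑ i : Fin (m+1), cw n (f i) (f (i+1))
      = wt l + cw n (l.getLast hne) (l.head hne) := by
    rw [Fin.sum_univ_castSucc]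
    congr 1
    · rw [wt_eq_sum m l hm]
      apply Finset.sum_congr rfl
      intro i _
      rw [Fin.coeSucc_eq_succ]
      rfl
    · rw [Fin.last_add_one, hlast, hhead]
  rw [← hsplit, htot]
  have h1 : (A:ℝ) + 1 ≤ D := by exact_mod_cast hnasc
  have h2 : (D:ℝ) ≤ n := by
    have : D ≤ n := by omega
    exact_mod_cast this
  have h3 : (0:ℝ) ≤ A := Nat.cast_nonneg A
  nlinarith

def Sset (R : Fin n → Fin n → Prop) (v : Fin n) : Set ℝ :=
  {x | ∃ l : List (Fin n), ∃ h : l ≠ [], l.Nodup ∧ List.Chain' R l ∧ l.getLast h = v ∧ x = wt l}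

lemma Sset_nonempty (R : Fin n → Fin n → Prop) (v : Fin n) : (Sset R v).Nonempty :=
  ⟨wt [v], [v], by simp, List.nodup_singleton v, List.isChain_singleton v,
    List.getLast_singleton _, rfl⟩

lemma Sset_bddAbove (R : Fin n → Fin n → Prop) (v : Fin n) : BddAbove (Sset R v) := by
  refine ⟨(n : ℝ) * (2*n+3), ?_⟩
  rintro x ⟨l, h, hnd, hch, hlast, rfl⟩
  have h1 : wt l ≤ l.length * (2*n+3) := wt_le l
  have h2 : (l.length : ℝ) ≤ n := by
    have := hnd.length_le_card
    simp only [Fintype.card_fin] at this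
    exact_mod_cast this
  have h3 : (0:ℝ) ≤ 2*n+3 := by positivity
  nlinarith

noncomputable def pot (R : Fin n → Fin n → Prop) (v : Fin n) : ℝ := sSup (Sset R v)

lemma pot_edge (R : Fin n → Fin n → Prop) (htour : IsTournament R) (hsemi : Semiacyclic R)
    {u v : Fin n} (huv : R u v) : pot R u + cw n u v ≤ pot R v := by
  classical
  have key : pot R u ≤ pot R v - cw n u v := by
    apply csSup_le (Sset_nonempty R u)
    rintro x ⟨l, h, hnd, hch, hlast, rfl⟩
    rw [le_sub_iff_add_le]
    by_cases hv : v ∈ l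
    · obtain ⟨P₁, P₂, rfl⟩ := List.append_of_mem hv
      have hkey := wt_append_cons P₁ v P₂
      have hlast2 : (v :: P₂).getLast (by simp) = u := by
        rw [← hlast]
        exact (List.getLast_append_of_ne_nil _ (by simp)).symm
      have hnd2 : (v :: P₂).Nodup := (List.sublist_append_right P₁ _).nodup hnd
      have hch2 : List.Chain' R (v :: P₂) := (List.isChain_append.mp hch).2.1
      have hcyc := cycle_neg R htour hsemi (v :: P₂) (by simp) hnd2 hch2
        (by rw [hlast2, List.head_cons]; exact huv)
      rw [hlast2, List.head_cons] at hcyc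
      have hmem : wt (P₁ ++ [v]) ∈ Sset R v := by
        refine ⟨P₁ ++ [v], by simp, ?_, ?_, List.getLast_concat, rfl⟩
        · exact (List.Sublist.append_left
            ((List.nil_sublist P₂).cons_cons v) P₁).nodup hnd
        · rcases List.isChain_append.mp hch with ⟨hc1, hc2, hc3⟩
          exact List.isChain_append.mpr ⟨hc1, List.isChain_singleton v,
            by intro x hx y hy; simp at hy; subst hy; exact hc3 x hx v (by simp)⟩
      have hle := le_csSup (Sset_bddAbove R v) hmem
      have : pot R v = sSup (Sset R v) := rfl
      rw [hkey]
      unfold pot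
      linarith
    · have hnd2 : (l ++ [v]).Nodup := by
        rw [List.nodup_append]
        exact ⟨hnd, List.nodup_singleton v, by intro x hx y hy; simp at hy; subst hy; rintro rfl; exact hv hx⟩
      have hch2 : List.Chain' R (l ++ [v]) := by
        apply List.isChain_append.mpr
        refine ⟨hch, List.isChain_singleton v, ?_⟩
        intro x hx y hy
        rw [List.getLast?_eq_getLast h] at hx
        simp at hx hy
        subst hx; subst hy
        rw [hlast]; exact huv
      have hmem : wt (l ++ [v]) ∈ Sset R v :=
        ⟨l ++ [v], by simp, hnd2, hch2, List.getLast_concat, rfl⟩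
      have hle := le_csSup (Sset_bddAbove R v) hmem
      rw [wt_append_single l h v, hlast] at hle
      exact hle
  linarith

lemma dom_pair (s1 s2 b1 b2 : ℝ) (hs1 : 2 ≤ s1) (hs2 : 2 ≤ s2)
    (hb1 : 0 < b1) (hb2 : 0 < b2) (hb : b1 < b2) :
    (Dominates 0 b1 s1⁻¹ 0 b2 s2⁻¹ ↔ s1 + 1 < s2) ∧
    (Dominates 0 b2 s2⁻¹ 0 b1 s1⁻¹ ↔ s2 < s1 + 1) := by
  have h1 : (0:ℝ) < s1 := by linarith
  have h2 : (0:ℝ) < s2 := by linarith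
  have e0 : ¬ ((0:ℝ) < 0) := lt_irrefl 0
  have eb1 : ¬ (b1 < 0) := not_lt.mpr hb1.le
  have eb2 : ¬ (b2 < 0) := not_lt.mpr hb2.le
  have enn : ¬ (b2 < b1) := not_lt.mpr hb.le
  have W1 : winProb 0 b1 s1⁻¹ 0 b2 s2⁻¹ = s2 * ((s1+1)*(s2+1))⁻¹ := by
    unfold winProb
    rw [if_neg e0, if_neg eb2, if_pos hb1, if_neg enn]
    field_simp
    ring
  have W2 : winProb 0 b2 s2⁻¹ 0 b1 s1⁻¹ = (s2+1)⁻¹ := by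
    unfold winProb
    rw [if_neg e0, if_neg eb1, if_pos hb2, if_pos hb]
    field_simp
    ring
  have hX : (0:ℝ) < (s1+1)*(s2+1) := by positivity
  have hY : (0:ℝ) < s2+1 := by positivity
  constructor
  · rw [Dominates, W1, W2, ← one_div, ← one_div, mul_one_div,
      div_lt_div_iff₀ hY hX]
    constructor <;> intro h <;> nlinarith
  · rw [Dominates, W1, W2, ← one_div, ← one_div, mul_one_div,
      div_lt_div_iff₀ hX hY]
    constructor <;> intro h <;> nlinarith


/-- Every semiacyclic tournament is the dominance graph of a set of loser coins. -/
theorem stmt11 {n : ℕ} (R : Fin n → Fin n → Prop)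
    (htour : IsTournament R) (hsemi : Semiacyclic R) :
    ∃ a b x : Fin n → ℝ,
      (∀ i, a i < b i ∧ 0 < x i ∧ x i < 1) ∧
      ∀ i j : Fin n, i ≠ j →
        (Dominates (a i) (b i) (x i) (a j) (b j) (x j) ↔ R i j) := by
  classical
  rcases Nat.eq_zero_or_pos n with rfl | hn
  · exact ⟨Fin.elim0, Fin.elim0, Fin.elim0, fun i => i.elim0, fun i j _ => i.elim0⟩
  have hne0 : Nonempty (Fin n) := ⟨⟨0, hn⟩⟩
  set M : ℝ := Finset.univ.inf' Finset.univ_nonempty (pot R) with hM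
  set u : Fin n → ℝ := fun i => (pot R i - M)/(2*n+2) + 2 with hu
  have hden : (0:ℝ) < 2*n+2 := by positivity
  have hu2 : ∀ i, 2 ≤ u i := by
    intro i
    have h1 : M ≤ pot R i := Finset.inf'_le _ (Finset.mem_univ i)
    have h2 : 0 ≤ (pot R i - M)/(2*(n:ℝ)+2) := div_nonneg (by linarith) hden.le
    simp only [hu]
    linarith
  have hdiff : ∀ i j : Fin n, u j - u i = (pot R j - pot R i)/(2*n+2) := by
    intro i j; simp only [hu]; ring
  have hAsc : ∀ i j : Fin n, i < j → R i j → u i + 1 < u j := by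
    intro i j hij hR
    have h := pot_edge R htour hsemi hR
    simp only [cw, if_pos hij] at h
    have h2 : (2*(n:ℝ)+2) < pot R j - pot R i := by linarith
    have h4 := hdiff i j
    have h5 : (1:ℝ) < u j - u i := by
      rw [h4]; exact (one_lt_div hden).mpr h2
    linarith
  have hDesc : ∀ i j : Fin n, i < j → R j i → u j < u i + 1 := by
    intro i j hij hR
    have h := pot_edge R htour hsemi hR
    have hnot : ¬ (j < i) := not_lt.mpr hij.le
    simp only [cw, if_neg hnot] at h
    have h2 : pot R j - pot R i < 2*(n:ℝ)+2 := by linarith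
    have h4 := hdiff i j
    have h5 : u j - u i < 1 := by
      rw [h4]; exact (div_lt_one hden).mpr h2
    linarith
  refine ⟨fun _ => 0, fun i => ((i:ℕ):ℝ)+1, fun i => (u i)⁻¹, ?_, ?_⟩
  · intro i
    have h2 := hu2 i
    have h0 : (0:ℝ) < u i := by linarith
    refine ⟨by positivity, inv_pos.mpr h0, ?_⟩
    have h1 : 1 < u i := by linarith
    rw [inv_lt_one_iff₀]
    right; exact h1
  · have key : ∀ i j : Fin n, i < j →
        ((Dominates 0 (((i:ℕ):ℝ)+1) (u i)⁻¹ 0 (((j:ℕ):ℝ)+1) (u j)⁻¹ ↔ R i j) ∧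
         (Dominates 0 (((j:ℕ):ℝ)+1) (u j)⁻¹ 0 (((i:ℕ):ℝ)+1) (u i)⁻¹ ↔ R j i)) := by
      intro i j hij
      have hijn : (i:ℕ) < (j:ℕ) := hij
      have hij' : ((i:ℕ):ℝ) + 1 < ((j:ℕ):ℝ)+1 := by
        have : ((i:ℕ):ℝ) < ((j:ℕ):ℝ) := by exact_mod_cast hijn
        linarith
      obtain ⟨hd1, hd2⟩ := dom_pair (u i) (u j) (((i:ℕ):ℝ)+1) (((j:ℕ):ℝ)+1)
        (hu2 i) (hu2 j) (by positivity) (by positivity) hij'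
      have hnij : i ≠ j := ne_of_lt hij
      constructor
      · rw [hd1]
        constructor
        · intro h
          by_contra hR
          have hRji : R j i := by
            have := htour.2 i j hnij
            tauto
          have := hDesc i j hij hRji
          linarith
        · exact hAsc i j hij
      · rw [hd2]
        constructor
        · intro h
          by_contra hR
          have hRij : R i j := by
            have := htour.2 i j hnij
            tauto
          have := hAsc i j hij hRij
          linarith
        · exact hDesc i j hij
    intro i j hne
    rcases lt_or_gt_of_ne hne with h | h
    · exact (key i j h).1
    · exact (key j i h).2
end

section
/- Let c_1, …, c_n be coins with types (a_i, b_i, x_i) satisfying a_i ≤ b_i and 0 < x_i ≤ 1 for all i (i.e., the set contains no winner coins), and suppose their dominance graph is a tournament T on {1,…,n}. Then T is also the dominance graph of a set of n loser coins that all have the same number on one of their sides; that is, there exist coins c'_1, …, c'_n with types (a'_i, b'_i, x'_i) satisfying a'_i < b'_i, 0 < x'_i < 1, and a'_1 = a'_2 = … = a'_n, whose dominance graph is exactly T. -/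
open Finset

lemma aux_key_alg (x X P1 P2 P3 P4 Q1 Q2 Q3 Q4 : ℝ) (h1 : (1+x) ≠ 0) (h2 : (1+X) ≠ 0) :
    ((1/(1+x))*(1/(1+X))*P1 + (1/(1+x))*(X/(1+X))*P2 + (x/(1+x))*(1/(1+X))*P3
      + (x/(1+x))*(X/(1+X))*P4)
    - ((1/(1+X))*(1/(1+x))*Q1 + (1/(1+X))*(x/(1+x))*Q2 + (X/(1+X))*(1/(1+x))*Q3
      + (X/(1+X))*(x/(1+x))*Q4)
    = ((P1-Q1) + X*(P2-Q3) + x*(P3-Q2) + x*X*(P4-Q4)) / ((1+x)*(1+X)) := by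
  field_simp
  ring

lemma aux_dom_iff {a b x A B X : ℝ} (hx : 0 < x) (hX : 0 < X) :
    Dominates a b x A B X ↔
      0 < ((if A < a then (1:ℝ) else 0) - (if a < A then 1 else 0))
        + X * ((if B < a then (1:ℝ) else 0) - (if a < B then 1 else 0))
        + x * ((if A < b then (1:ℝ) else 0) - (if b < A then 1 else 0))
        + x * X * ((if B < b then (1:ℝ) else 0) - (if b < B then 1 else 0)) := by
  have h1 : (0:ℝ) < 1 + x := by linarith
  have h2 : (0:ℝ) < 1 + X := by linarith
  unfold Dominates winProb
  rw [← sub_pos, aux_key_alg x X _ _ _ _ _ _ _ _ h1.ne' h2.ne',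
    lt_div_iff₀ (mul_pos h1 h2), zero_mul]

lemma aux_inv_lt {p q : ℝ} (hp : 0 < p) (hq : 0 < q) :
    q⁻¹ * (1 + p⁻¹) < p⁻¹ ↔ p + 1 < q := by
  have hpq : (0:ℝ) < p * q := mul_pos hp hq
  have e1 : q⁻¹ * (1 + p⁻¹) = (p + 1) / (p * q) := by
    rw [eq_div_iff hpq.ne',
      show q⁻¹ * (1 + p⁻¹) * (p * q) = (q⁻¹*q)*((1+p⁻¹)*p) from by ring,
      inv_mul_cancel₀ hq.ne', one_mul, add_mul, one_mul, inv_mul_cancel₀ hp.ne']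
  have e2 : p⁻¹ = q / (p * q) := by
    rw [eq_div_iff hpq.ne', ← mul_assoc, inv_mul_cancel₀ hp.ne', one_mul]
  rw [e1, e2, div_lt_div_iff_of_pos_right hpq]

lemma aux_inv_lt' {p q : ℝ} (hp : 0 < p) (hq : 0 < q) :
    q⁻¹ < p⁻¹ * (1 + q⁻¹) ↔ p < q + 1 := by
  have hpq : (0:ℝ) < p * q := mul_pos hp hq
  have e1 : p⁻¹ * (1 + q⁻¹) = (q + 1) / (p * q) := by
    rw [eq_div_iff hpq.ne',
      show p⁻¹ * (1 + q⁻¹) * (p * q) = (p⁻¹*p)*((1+q⁻¹)*q) from by ring,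
      inv_mul_cancel₀ hp.ne', one_mul, add_mul, one_mul, inv_mul_cancel₀ hq.ne']
  have e2 : q⁻¹ = p / (p * q) := by
    rw [eq_div_iff hpq.ne', mul_comm p q, ← mul_assoc, inv_mul_cancel₀ hq.ne', one_mul]
  rw [e1, e2, div_lt_div_iff_of_pos_right hpq]

lemma aux_dom_lt {α p q xp xq : ℝ} (hαp : α < p) (hαq : α < q) (hpq : p < q)
    (hxp : 0 < xp) (hxq : 0 < xq) :
    Dominates α p xp α q xq ↔ xq * (1 + xp) < xp := by
  rw [aux_dom_iff hxp hxq, if_neg (lt_irrefl α), if_neg (by linarith : ¬ q < α),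
    if_pos hαq, if_pos hαp, if_neg (by linarith : ¬ p < α), if_neg (by linarith : ¬ q < p),
    if_pos hpq]
  constructor <;> intro h <;> nlinarith

lemma aux_dom_gt {α p q xp xq : ℝ} (hαq : α < q) (hqp : q < p)
    (hxp : 0 < xp) (hxq : 0 < xq) :
    Dominates α p xp α q xq ↔ xq < xp * (1 + xq) := by
  rw [aux_dom_iff hxp hxq, if_neg (lt_irrefl α), if_neg (by linarith : ¬ q < α),
    if_pos hαq, if_pos (by linarith : α < p), if_neg (by linarith : ¬ p < α),
    if_pos hqp, if_neg (by linarith : ¬ p < q)]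
  constructor <;> intro h <;> nlinarith

lemma aux_dom_eq {α p xp xq : ℝ} (hαp : α < p) (hxp : 0 < xp) (hxq : 0 < xq) :
    Dominates α p xp α p xq ↔ xq < xp := by
  rw [aux_dom_iff hxp hxq, if_neg (lt_irrefl α), if_neg (by linarith : ¬ p < α),
    if_pos hαp, if_neg (lt_irrefl p)]
  constructor <;> intro h <;> nlinarith

lemma aux_dom_cl {α q xp xq : ℝ} (hαq : α < q) (hxp : 0 < xp) (hxq : 0 < xq) :
    ¬ Dominates α α xp α q xq := by
  rw [aux_dom_iff hxp hxq, if_neg (lt_irrefl α), if_neg (by linarith : ¬ q < α),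
    if_pos hαq]
  intro h
  nlinarith [mul_pos hxp hxq]

lemma aux_dom_cw {α q xp xq : ℝ} (hαq : α < q) (hxq : 0 < xq) (hxp : 0 < xp) :
    Dominates α q xq α α xp := by
  rw [aux_dom_iff hxq hxp, if_neg (lt_irrefl α), if_pos hαq, if_neg (by linarith : ¬ q < α)]
  nlinarith [mul_pos hxq hxp]

lemma aux_dom_cc {α xp xq : ℝ} (hxp : 0 < xp) (hxq : 0 < xq) :
    ¬ Dominates α α xp α α xq := by
  rw [aux_dom_iff hxp hxq, if_neg (lt_irrefl α)]
  intro h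
  nlinarith

lemma aux_cross {a b x A B X : ℝ} (hab : a ≤ b) (hAB : A ≤ B) (hx : 0 < x)
    (hx1 : x ≤ 1) (hX : 0 < X) (haA : a < A) : ¬ Dominates a b x A B X := by
  rw [aux_dom_iff hx hX, if_neg (lt_asymm haA), if_pos haA,
    if_neg (by linarith : ¬ B < a), if_pos (by linarith : a < B)]
  intro h
  split_ifs at h <;> nlinarith [mul_pos hx hX]


/-- If a set of coins contains no winner coins and its dominance graph is a
tournament, then this tournament is also the dominance graph of a set of loser
coins that all have the same number on one of their sides. -/
theorem stmt12 {n : ℕ} (a b x : Fin n → ℝ)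
    (hcoin : ∀ i, a i ≤ b i ∧ 0 < x i ∧ x i ≤ 1)
    (htour : IsTournament
      (fun i j : Fin n => Dominates (a i) (b i) (x i) (a j) (b j) (x j))) :
    ∃ a' b' x' : Fin n → ℝ,
      (∀ i, a' i < b' i ∧ 0 < x' i ∧ x' i < 1) ∧
      (∀ i j : Fin n, a' i = a' j) ∧
      ∀ i j : Fin n,
        (Dominates (a' i) (b' i) (x' i) (a' j) (b' j) (x' j) ↔
          Dominates (a i) (b i) (x i) (a j) (b j) (x j)) := by
  classical
  have hx0 : ∀ i, 0 < x i := fun i => (hcoin i).2.1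
  have hx1 : ∀ i, x i ≤ 1 := fun i => (hcoin i).2.2
  have hab : ∀ i, a i ≤ b i := fun i => (hcoin i).1
  have hu1 : ∀ i, 1 ≤ (x i)⁻¹ := fun i => one_le_inv_iff₀.mpr ⟨hx0 i, hx1 i⟩
  set S : ℝ := ∑ i, (x i)⁻¹ with hS_def
  have hSnn : 0 ≤ S := Finset.sum_nonneg fun i _ => le_trans zero_le_one (hu1 i)
  have huS : ∀ i, (x i)⁻¹ ≤ S := fun i =>
    Finset.single_le_sum (fun j _ => le_trans zero_le_one (hu1 j)) (mem_univ i)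
  set Mg : ℝ := 1 + ∑ i, ∑ j, (if a i < a j then (a j - a i)⁻¹ else 0) with hMg_def
  have hgnn : ∀ i j : Fin n, 0 ≤ (if a i < a j then (a j - a i)⁻¹ else 0) := by
    intro i j
    split_ifs with h
    · exact inv_nonneg.2 (by linarith)
    · exact le_rfl
  have hMgpos : 0 < Mg := by
    have h0 : 0 ≤ ∑ i, ∑ j, (if a i < a j then (a j - a i)⁻¹ else 0) :=
      Finset.sum_nonneg fun i _ => Finset.sum_nonneg fun j _ => hgnn i j
    rw [hMg_def]; linarith
  have hMg1 : ∀ i j, a i < a j → 1 ≤ Mg * (a j - a i) := by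
    intro i j hij
    have hterm : (a j - a i)⁻¹ ≤ Mg := by
      have h1 : (if a i < a j then (a j - a i)⁻¹ else 0)
          ≤ ∑ j', (if a i < a j' then (a j' - a i)⁻¹ else 0) :=
        Finset.single_le_sum (fun j' _ => hgnn i j') (mem_univ j)
      rw [if_pos hij] at h1
      have h2 : (∑ j', (if a i < a j' then (a j' - a i)⁻¹ else 0))
          ≤ ∑ i', ∑ j', (if a i' < a j' then (a j' - a i')⁻¹ else 0) :=
        Finset.single_le_sum (fun i' _ => Finset.sum_nonneg fun j' _ => hgnn i' j')
          (mem_univ i)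
      rw [hMg_def]; linarith
    have hpos : 0 < a j - a i := by linarith
    calc (1:ℝ) = (a j - a i)⁻¹ * (a j - a i) := (inv_mul_cancel₀ hpos.ne').symm
    _ ≤ Mg * (a j - a i) := mul_le_mul_of_nonneg_right hterm hpos.le
  set B0 : ℝ := 1 + ∑ i, |b i| with hB0_def
  have hB0 : ∀ i, |b i| ≤ B0 - 1 := by
    intro i
    have := Finset.single_le_sum (f := fun i => |b i|) (fun j _ => abs_nonneg _) (mem_univ i)
    rw [hB0_def]; linarith
  have hB0pos : 0 < B0 := by
    have : 0 ≤ ∑ i, |b i| := Finset.sum_nonneg fun i _ => abs_nonneg _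
    rw [hB0_def]; linarith
  set N : ℝ := 2 * B0 * Mg with hN_def
  have hNpos : 0 < N := by rw [hN_def]; positivity
  set C0 : ℝ := 1 + ∑ i, (N * |a i| + |b i|) with hC0_def
  have hC0 : ∀ i, N * |a i| + |b i| ≤ C0 - 1 := by
    intro i
    have := Finset.single_le_sum (f := fun i => N * |a i| + |b i|)
      (fun j _ => by positivity) (mem_univ i)
    rw [hC0_def]; linarith
  set A0 : ℝ := 1 + ∑ i, |a i| with hA0_def
  have hA0 : ∀ i, 1 ≤ A0 - a i := by
    intro i
    have h1 := Finset.single_le_sum (f := fun i => |a i|) (fun j _ => abs_nonneg _) (mem_univ i)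
    have h2 := le_abs_self (a i)
    rw [hA0_def]; linarith
  set b' : Fin n → ℝ := fun i => N * a i + b i + C0 with hb'_def
  have hb'pos : ∀ i, 0 < b' i := by
    intro i
    have h1 := hC0 i
    have h2 := neg_abs_le (a i)
    have h3 := neg_abs_le (b i)
    have h4 : N * (-|a i|) ≤ N * a i := mul_le_mul_of_nonneg_left h2 hNpos.le
    simp only [hb'_def]
    nlinarith
  have hb'lt : ∀ i j, a i < a j → b' i < b' j := by
    intro i j hij
    have h1 := hMg1 i j hij
    have h2 : 2 * B0 * 1 ≤ 2 * B0 * (Mg * (a j - a i)) :=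
      mul_le_mul_of_nonneg_left h1 (by linarith)
    have h3 : 2 * B0 * (Mg * (a j - a i)) = N * a j - N * a i := by rw [hN_def]; ring
    have h4 := hB0 i
    have h5 := hB0 j
    have h6 := le_abs_self (b i)
    have h7 := neg_abs_le (b j)
    simp only [hb'_def]
    nlinarith
  have hb'd : ∀ i j, a i = a j → b' j - b' i = b j - b i := by
    intro i j h
    simp only [hb'_def]
    rw [h]; ring
  set v : Fin n → ℝ := fun i => if a i = b i then S + 1 else (x i)⁻¹ with hv_def
  have hv1 : ∀ i, 1 ≤ v i := by
    intro i
    simp only [hv_def]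
    split_ifs
    · linarith
    · exact hu1 i
  have hvS : ∀ i, v i ≤ S + 1 := by
    intro i
    simp only [hv_def]
    split_ifs
    · exact le_rfl
    · linarith [huS i]
  set c : Fin n → ℝ := fun i => Mg * (S + 1) * (A0 - a i) with hc_def
  have hcpos : ∀ i, 0 < c i := fun i =>
    mul_pos (mul_pos hMgpos (by linarith)) (by linarith [hA0 i])
  have hceq : ∀ i j, a i = a j → c i = c j := by
    intro i j h
    simp only [hc_def]; rw [h]
  have hcd : ∀ i j, a i < a j → S + 1 ≤ c i - c j := by
    intro i j hij
    have h1 := hMg1 i j hij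
    have h2 : c i - c j = (S + 1) * (Mg * (a j - a i)) := by simp only [hc_def]; ring
    have h3 : (S + 1) * 1 ≤ (S + 1) * (Mg * (a j - a i)) :=
      mul_le_mul_of_nonneg_left h1 (by linarith)
    linarith [h2 ▸ h3]
  set w : Fin n → ℝ := fun i => v i + c i with hw_def
  have hw1 : ∀ i, 1 < w i := by
    intro i
    simp only [hw_def]
    linarith [hv1 i, hcpos i]
  have hw0 : ∀ i, 0 < w i := fun i => lt_trans one_pos (hw1 i)
  have hx'0 : ∀ i, 0 < (w i)⁻¹ := fun i => inv_pos.2 (hw0 i)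
  have hcross : ∀ i j, a i < a j → w j < w i + 1 := by
    intro i j hij
    have h1 := hcd i j hij
    have h2 := hv1 i
    have h3 := hvS j
    simp only [hw_def]
    linarith
  have hwc : ∀ i, a i = b i → w i = (S + 1) + c i := by
    intro i h
    simp only [hw_def, hv_def]
    rw [if_pos h]
  have hwn : ∀ i, ¬ a i = b i → w i = (x i)⁻¹ + c i := by
    intro i h
    simp only [hw_def, hv_def]
    rw [if_neg h]
  refine ⟨fun _ => 0, b', fun i => (w i)⁻¹,
    fun i => ⟨hb'pos i, hx'0 i, inv_lt_one_of_one_lt₀ (hw1 i)⟩, fun i j => rfl, ?_⟩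
  intro i j
  show Dominates 0 (b' i) (w i)⁻¹ 0 (b' j) (w j)⁻¹ ↔ _
  rcases lt_trichotomy (a i) (a j) with h | h | h
  · -- a i < a j : both sides false
    have hO : ¬ Dominates (a i) (b i) (x i) (a j) (b j) (x j) :=
      aux_cross (hab i) (hab j) (hx0 i) (hx1 i) (hx0 j) h
    have hT : ¬ Dominates 0 (b' i) (w i)⁻¹ 0 (b' j) (w j)⁻¹ := by
      rw [aux_dom_lt (hb'pos i) (hb'pos j) (hb'lt i j h) (hx'0 i) (hx'0 j),
        aux_inv_lt (hw0 i) (hw0 j)]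
      intro hh
      linarith [hcross i j h]
    exact iff_of_false hT hO
  · -- a i = a j
    rcases lt_trichotomy (b i) (b j) with hbb | hbb | hbb
    · -- b i < b j
      have hb'ij : b' i < b' j := by have := hb'd i j h; linarith
      by_cases hci : a i = b i
      · -- i constant, j nonconstant
        have hαq : a j < b j := by
          have : a j = b i := by rw [← h, hci]
          linarith
        have hcj : ¬ a j = b j := by intro e; linarith [hαq]
        have hO : ¬ Dominates (a i) (b i) (x i) (a j) (b j) (x j) := by
          rw [← hci, h]
          exact aux_dom_cl hαq (hx0 i) (hx0 j)
        have hT : ¬ Dominates 0 (b' i) (w i)⁻¹ 0 (b' j) (w j)⁻¹ := by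
          rw [aux_dom_lt (hb'pos i) (hb'pos j) hb'ij (hx'0 i) (hx'0 j),
            aux_inv_lt (hw0 i) (hw0 j)]
          rw [hwc i hci, hwn j hcj, hceq i j h]
          intro hh
          linarith [huS j]
        exact iff_of_false hT hO
      · -- both nonconstant
        have hαi : a i < b i := lt_of_le_of_ne (hab i) hci
        have hαj2 : a i < b j := lt_trans hαi hbb
        have hcj : ¬ a j = b j := by
          intro e; rw [← h] at e; exact absurd hαj2 (by rw [e]; exact lt_irrefl _)
        have hinv := aux_inv_lt (p := (x i)⁻¹) (q := (x j)⁻¹)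
          (inv_pos.2 (hx0 i)) (inv_pos.2 (hx0 j))
        rw [inv_inv, inv_inv] at hinv
        rw [aux_dom_lt (hb'pos i) (hb'pos j) hb'ij (hx'0 i) (hx'0 j),
          aux_inv_lt (hw0 i) (hw0 j), ← h,
          aux_dom_lt hαi hαj2 hbb (hx0 i) (hx0 j), hinv,
          hwn i hci, hwn j hcj, hceq i j h]
        constructor <;> intro hh <;> linarith
    · -- b i = b j
      have hb'e : b' i = b' j := by have := hb'd i j h; linarith
      by_cases hci : a i = b i
      · -- both constant
        have hcj : a j = b j := by rw [← h, hci, hbb]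
        have hO : ¬ Dominates (a i) (b i) (x i) (a j) (b j) (x j) := by
          rw [← hci, ← hcj, ← h]
          exact aux_dom_cc (hx0 i) (hx0 j)
        have hT : ¬ Dominates 0 (b' i) (w i)⁻¹ 0 (b' j) (w j)⁻¹ := by
          rw [hb'e, aux_dom_eq (hb'pos j) (hx'0 i) (hx'0 j)]
          have hwe : w i = w j := by rw [hwc i hci, hwc j hcj, hceq i j h]
          rw [hwe]
          exact lt_irrefl _
        exact iff_of_false hT hO
      · -- both nonconstant
        have hαi : a i < b i := lt_of_le_of_ne (hab i) hci
        have hcj : ¬ a j = b j := by intro e; exact hci (by linarith)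
        rw [hb'e, aux_dom_eq (hb'pos j) (hx'0 i) (hx'0 j),
          inv_lt_inv₀ (hw0 j) (hw0 i), ← h, ← hbb,
          aux_dom_eq hαi (hx0 i) (hx0 j),
          ← inv_lt_inv₀ (hx0 i) (hx0 j),
          hwn i hci, hwn j hcj, hceq i j h]
        constructor <;> intro hh <;> linarith
    · -- b j < b i
      have hb'ji : b' j < b' i := by have := hb'd i j h; linarith
      by_cases hcj : a j = b j
      · -- j constant, i nonconstant
        have hαi : a i < b i := by
          have : a i = b j := by rw [h, hcj]
          linarith
        have hci : ¬ a i = b i := by intro e; linarith [hαi]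
        have hO : Dominates (a i) (b i) (x i) (a j) (b j) (x j) := by
          rw [← hcj, ← h]
          exact aux_dom_cw hαi (hx0 i) (hx0 j)
        have hT : Dominates 0 (b' i) (w i)⁻¹ 0 (b' j) (w j)⁻¹ := by
          rw [aux_dom_gt (hb'pos j) hb'ji (hx'0 i) (hx'0 j),
            aux_inv_lt' (hw0 i) (hw0 j)]
          rw [hwc j hcj, hwn i hci, hceq i j h]
          linarith [huS i]
        exact iff_of_true hT hO
      · -- both nonconstant
        have hαj : a j < b j := lt_of_le_of_ne (hab j) hcj
        have hαqi : a i < b j := by linarith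
        have hαi2 : a i < b i := by linarith
        have hci : ¬ a i = b i := by intro e; linarith [hαi2]
        have hinv := aux_inv_lt' (p := (x i)⁻¹) (q := (x j)⁻¹)
          (inv_pos.2 (hx0 i)) (inv_pos.2 (hx0 j))
        rw [inv_inv, inv_inv] at hinv
        rw [aux_dom_gt (hb'pos j) hb'ji (hx'0 i) (hx'0 j),
          aux_inv_lt' (hw0 i) (hw0 j), ← h,
          aux_dom_gt hαqi hbb (hx0 i) (hx0 j), hinv,
          hwn i hci, hwn j hcj, hceq i j h]
        constructor <;> intro hh <;> linarith
  · -- a j < a i : both sides true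
    have hne : i ≠ j := fun e => absurd h (by rw [e]; exact lt_irrefl _)
    have hO' : ¬ Dominates (a j) (b j) (x j) (a i) (b i) (x i) :=
      aux_cross (hab j) (hab i) (hx0 j) (hx1 j) (hx0 i) h
    have hO : Dominates (a i) (b i) (x i) (a j) (b j) (x j) :=
      (htour.2 i j hne).mpr hO'
    have hT : Dominates 0 (b' i) (w i)⁻¹ 0 (b' j) (w j)⁻¹ := by
      rw [aux_dom_gt (hb'pos j) (hb'lt j i h) (hx'0 i) (hx'0 j),
        aux_inv_lt' (hw0 i) (hw0 j)]
      linarith [hcross j i h]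
    exact iff_of_true hT hO
end

section
/- Let C₃ denote the 3-cycle tournament on {0,1,2} with edges 0→1, 1→2, 2→0, and let C₃×C₃ be the direct product tournament on {0,1,2}×{0,1,2}. There exists a family of 9 coins (c_v)_{v ∈ {0,1,2}×{0,1,2}} such that for all distinct vertices u, v of C₃×C₃, coin c_u dominates coin c_v if and only if u → v holds in C₃×C₃; in particular, C₃×C₃ is the dominance graph of a set of coins. -/
open Finset

set_option maxHeartbeats 4000000 in
/-- The tournament `C₃ × C₃` is the dominance graph of a set of nine coins. -/
theorem stmt14 :
    ∃ a b x : Fin 3 × Fin 3 → ℝ,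
      (∀ v, a v ≤ b v ∧ 0 < x v) ∧
      ∀ u v : Fin 3 × Fin 3, u ≠ v →
        (Dominates (a u) (b u) (x u) (a v) (b v) (x v) ↔ TournProd C3 C3 u v) := by
  refine ⟨fun v => ![![2,8,7],![18,18,18],![12,10,16]] v.1 v.2,
          fun v => ![![19,19,19],![24,36,28],![28,22,20]] v.1 v.2,
          fun v => ![![11/2,21/5,24/5],![1/2,6/19,7/18],![7/10,19/17,9/5]] v.1 v.2,
          ?_, ?_⟩
  · intro v
    fin_cases v <;> norm_num
  · intro u v huv
    fin_cases u <;> fin_cases v <;>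
      first
      | exact absurd rfl huv
      | (refine iff_of_true ?_ (by simp only [TournProd, C3]; decide)
         norm_num [Dominates, winProb])
      | (refine iff_of_false ?_ (by simp only [TournProd, C3]; decide)
         norm_num [Dominates, winProb])
end

section
/- Let T be a tournament on a finite set V. Suppose there is a family of coins (c_v)_{v∈V} such that for all distinct u, v ∈ V, coin c_u dominates coin c_v if and only if u → v holds in T. Then V can be written as a union V = V₁ ∪ V₂ such that for each k ∈ {1,2}, the subtournament of T induced on V_k can be made semiacyclic, i.e., there is a bijection σ_k : V_k → {1,…,|V_k|} such that the tournament on {1,…,|V_k|} with σ_k(u)→σ_k(v) whenever u→v in T (for u,v ∈ V_k) is semiacyclic. -/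
open Finset

/-! ### Auxiliary material for the proof -/

/-- The normalized score `(winProb difference) · (1+x)(1+x')`. -/
noncomputable def coinScore (a b x a' b' x' : ℝ) : ℝ :=
  ((if a' < a then (1:ℝ) else 0) - (if a < a' then 1 else 0))
  + x' * ((if b' < a then 1 else 0) - (if a < b' then 1 else 0))
  + x * ((if a' < b then 1 else 0) - (if b < a' then 1 else 0))
  + x * x' * ((if b' < b then 1 else 0) - (if b < b' then 1 else 0))

lemma dom_iff_s15 {a b x a' b' x' : ℝ} (hx : 0 < x) (hx' : 0 < x') :
    Dominates a b x a' b' x' ↔ 0 < coinScore a b x a' b' x' := by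
  have h1 : (0:ℝ) < 1 + x := by linarith
  have h2 : (0:ℝ) < 1 + x' := by linarith
  have key : winProb a b x a' b' x' - winProb a' b' x' a b x
      = coinScore a b x a' b' x' / ((1 + x) * (1 + x')) := by
    unfold winProb coinScore
    generalize (if a' < a then (1:ℝ) else 0) = p1
    generalize (if a < a' then (1:ℝ) else 0) = p2
    generalize (if b' < a then (1:ℝ) else 0) = p3
    generalize (if a < b' then (1:ℝ) else 0) = p4
    generalize (if a' < b then (1:ℝ) else 0) = p5
    generalize (if b < a' then (1:ℝ) else 0) = p6
    generalize (if b' < b then (1:ℝ) else 0) = p7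
    generalize (if b < b' then (1:ℝ) else 0) = p8
    field_simp
    ring
  rw [Dominates, ← sub_pos, key, lt_div_iff₀ (by positivity), zero_mul]

section CoinLemmas

-- V₁ lemmas (the class x ≤ 1)
lemma coinL1 {a b x a' b' x' : ℝ} (hab' : a' ≤ b') (hx : 0 < x) (hx' : 0 < x')
    (hx1 : x ≤ 1) (ha : a < a') : ¬ Dominates a b x a' b' x' := by
  rw [dom_iff_s15 hx hx', not_lt]
  unfold coinScore
  rw [if_neg (by linarith : ¬ a' < a), if_pos ha, if_neg (by linarith : ¬ b' < a),
    if_pos (by linarith : a < b')]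
  have h1 : (0:ℝ) < x * x' := mul_pos hx hx'
  have h2 : x * x' ≤ x' := by nlinarith
  split_ifs <;> linarith

lemma coinL2 {a b x a' b' x' : ℝ} (hab' : a' ≤ b') (hx : 0 < x) (hx' : 0 < x')
    (hpt : a = b) (ha : a = a') : ¬ Dominates a b x a' b' x' := by
  rw [dom_iff_s15 hx hx', not_lt]
  unfold coinScore
  rw [if_neg (by linarith : ¬ a' < a), if_neg (by linarith : ¬ a < a'),
    if_neg (by linarith : ¬ b' < a), if_neg (by linarith : ¬ a' < b),
    if_neg (by linarith : ¬ b < a'), if_neg (by linarith : ¬ b' < b)]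
  have h1 : (0:ℝ) < x * x' := mul_pos hx hx'
  split_ifs <;> linarith

lemma coinL3 {a b x a' b' x' : ℝ} (hab : a ≤ b) (hx : 0 < x) (hx' : 0 < x')
    (ha : a = a') (hb : b < b') (hd : Dominates a b x a' b' x') :
    1 < 1 / x' - 1 / x := by
  rw [dom_iff_s15 hx hx'] at hd
  unfold coinScore at hd
  rw [if_neg (by linarith : ¬ a' < a), if_neg (by linarith : ¬ a < a'),
    if_neg (by linarith : ¬ b' < a), if_pos (by linarith : a < b'),
    if_neg (by linarith : ¬ b < a'), if_neg (by linarith : ¬ b' < b),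
    if_pos hb] at hd
  have h1 : (0:ℝ) < x * x' := mul_pos hx hx'
  have hkey : x' * (1 + x) < x := by
    split_ifs at hd <;> linarith
  have h2 : (1 + x) / x < 1 / x' := by
    rw [div_lt_div_iff₀ hx hx']
    nlinarith
  have h3 : 1 / x + 1 = (1 + x) / x := by field_simp
  linarith

lemma coinL4 {a b x a' b' x' : ℝ} (hab : a ≤ b) (hx : 0 < x) (hx' : 0 < x')
    (ha : a = a') (hv : a' < b') (hb : b' < b) (hd : Dominates a b x a' b' x') :
    -1 < 1 / x' - 1 / x := by
  rw [dom_iff_s15 hx hx'] at hd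
  unfold coinScore at hd
  rw [if_neg (by linarith : ¬ a' < a), if_neg (by linarith : ¬ a < a'),
    if_neg (by linarith : ¬ b' < a), if_pos (by linarith : a < b'),
    if_pos (by linarith : a' < b), if_neg (by linarith : ¬ b < a'),
    if_pos hb, if_neg (by linarith : ¬ b < b')] at hd
  have hkey : x' < x * (1 + x') := by nlinarith
  have h2 : 1 / x < (1 + x') / x' := by
    rw [div_lt_div_iff₀ hx hx']
    nlinarith
  have h3 : 1 / x' + 1 = (1 + x') / x' := by field_simp
  linarith

lemma coinL5 {a b x a' b' x' : ℝ} (hab : a ≤ b) (hx : 0 < x) (hx' : 0 < x')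
    (ha : a = a') (hb : b = b') (hd : Dominates a b x a' b' x') : x' < x := by
  rw [dom_iff_s15 hx hx'] at hd
  unfold coinScore at hd
  rw [if_neg (by linarith : ¬ a' < a), if_neg (by linarith : ¬ a < a'),
    if_neg (by linarith : ¬ b' < a), if_neg (by linarith : ¬ b < a'),
    if_neg (by linarith : ¬ b' < b), if_neg (by linarith : ¬ b < b')] at hd
  split_ifs at hd <;> linarith

-- V₂ lemmas (the class 1 < x)
lemma coinM1 {a b x a' b' x' : ℝ} (hab : a ≤ b) (hab' : a' ≤ b') (hx : 0 < x) (hx' : 0 < x')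
    (hx1' : 1 < x') (hb : b < b') : ¬ Dominates a b x a' b' x' := by
  rw [dom_iff_s15 hx hx', not_lt]
  unfold coinScore
  rw [if_neg (by linarith : ¬ b' < a), if_pos (by linarith : a < b'),
    if_neg (by linarith : ¬ b' < b), if_pos hb]
  have h1 : (0:ℝ) < x * x' := mul_pos hx hx'
  have h2 : x < x * x' := by nlinarith
  split_ifs <;> linarith

lemma coinM2 {a b x a' b' x' : ℝ} (hab : a ≤ b) (hx : 0 < x) (hx' : 0 < x')
    (hb : b = b') (hpt : a' = b') : ¬ Dominates a b x a' b' x' := by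
  rw [dom_iff_s15 hx hx', not_lt]
  unfold coinScore
  rw [if_neg (by linarith : ¬ a' < a), if_neg (by linarith : ¬ b' < a),
    if_neg (by linarith : ¬ a' < b), if_neg (by linarith : ¬ b < a'),
    if_neg (by linarith : ¬ b' < b), if_neg (by linarith : ¬ b < b')]
  split_ifs <;> linarith

lemma coinM3 {a b x a' b' x' : ℝ} (hab : a ≤ b) (hab' : a' ≤ b') (hx : 0 < x) (hx' : 0 < x')
    (hb : b = b') (ha : a < a') (hd : Dominates a b x a' b' x') : x' < x - 1 := by
  rw [dom_iff_s15 hx hx'] at hd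
  unfold coinScore at hd
  rw [if_neg (by linarith : ¬ a' < a), if_pos ha,
    if_neg (by linarith : ¬ b' < a), if_pos (by linarith : a < b'),
    if_neg (by linarith : ¬ b < a'),
    if_neg (by linarith : ¬ b' < b), if_neg (by linarith : ¬ b < b')] at hd
  split_ifs at hd <;> linarith

lemma coinM4 {a b x a' b' x' : ℝ} (hab' : a' ≤ b') (hx : 0 < x) (hx' : 0 < x')
    (hb : b = b') (ha : a' < a) (hu : a < b) (hd : Dominates a b x a' b' x') :
    x' < x + 1 := by
  rw [dom_iff_s15 hx hx'] at hd
  unfold coinScore at hd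
  rw [if_pos ha, if_neg (by linarith : ¬ a < a'),
    if_neg (by linarith : ¬ b' < a), if_pos (by linarith : a < b'),
    if_pos (by linarith : a' < b), if_neg (by linarith : ¬ b < a'),
    if_neg (by linarith : ¬ b' < b), if_neg (by linarith : ¬ b < b')] at hd
  linarith

end CoinLemmas

open Fin.NatCast Fin.CommRing in
/-- A cyclically non-increasing real function on `Fin (m+1)` is constant. -/
lemma cyc_const {m : ℕ} (f : Fin (m+1) → ℝ) (h : ∀ i, f (i+1) ≤ f i) : ∀ i, f i = f 0 := by
  have hre : ∑ i : Fin (m+1), f (i+1) = ∑ i : Fin (m+1), f i :=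
    Fintype.sum_equiv (Equiv.addRight 1) _ _ (fun i => rfl)
  have hsum : ∑ i : Fin (m+1), (f i - f (i+1)) = 0 := by
    rw [Finset.sum_sub_distrib, hre, sub_self]
  have hz := (Finset.sum_eq_zero_iff_of_nonneg
    (fun i _ => sub_nonneg.2 (h i))).1 hsum
  have hstep : ∀ i, f (i+1) = f i := fun i => by
    have := hz i (mem_univ i); linarith [this]
  have hnat : ∀ k : ℕ, f (k : Fin (m+1)) = f 0 := by
    intro k
    induction k with
    | zero => norm_num
    | succ n ih =>
      have : ((n+1 : ℕ) : Fin (m+1)) = ((n : ℕ) : Fin (m+1)) + 1 := by push_cast; ring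
      rw [this, hstep, ih]
  intro i
  rw [← Fin.cast_val_eq_self i, hnat]

lemma fin_ne_add_one {m : ℕ} (i : Fin (m+2)) : i ≠ i + 1 := by
  intro h
  have h1 : (1 : Fin (m+2)) = 0 := left_eq_add.mp h
  have := congrArg Fin.val h1
  simp [Fin.val_one] at this

/-- Order the elements of a finset by an injective key. -/
lemma exists_key_equiv {V : Type*} (s : Finset V) {κ : Type*} [LinearOrder κ] (K : V → κ)
    (hinj : ∀ u ∈ s, ∀ v ∈ s, K u = K v → u = v) :
    ∃ e : ↥s ≃ Fin s.card, ∀ p q : ↥s, (K ↑p < K ↑q ↔ e p < e q) := by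
  classical
  set t : Finset κ := s.image K with ht
  have hcard : t.card = s.card :=
    Finset.card_image_of_injOn (fun u hu v hv h => hinj u hu v hv h)
  let oe : Fin s.card ≃o ↥t := t.orderIsoOfFin hcard
  let f : ↥s → ↥t := fun p => ⟨K ↑p, Finset.mem_image_of_mem K p.2⟩
  have hfinj : Function.Injective f := by
    intro p q h
    exact Subtype.ext (hinj _ p.2 _ q.2 (congrArg Subtype.val h))
  have hbij : Function.Bijective f := by
    rw [Fintype.bijective_iff_injective_and_card]
    exact ⟨hfinj, by simp [Fintype.card_coe, hcard]⟩
  refine ⟨(Equiv.ofBijective f hbij).trans oe.symm.toEquiv, ?_⟩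
  intro p q
  have : ∀ r : ↥s, ((Equiv.ofBijective f hbij).trans oe.symm.toEquiv) r = oe.symm (f r) :=
    fun r => rfl
  rw [this, this, oe.symm.lt_iff_lt]
  exact Subtype.mk_lt_mk.symm

/-- The abstract counting argument: a tournament on a keyed vertex set is semiacyclic
provided there is a potential increasing by more than `1` along every "ascending" edge
of a cycle and by more than `-1` along every "descending" one. -/
lemma semi_of_key {V : Type*} (R : V → V → Prop) (hirr : ∀ v, ¬ R v v)
    (s : Finset V) {κ : Type*} [LinearOrder κ] (K : V → κ) (ψ : V → ℝ)
    (hinj : ∀ u ∈ s, ∀ v ∈ s, K u = K v → u = v)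
    (hedge : ∀ (m : ℕ) (d : Fin (m+2) → V), (∀ i, d i ∈ s) → Function.Injective d →
      (∀ i, R (d i) (d (i+1))) →
      ∀ i, (K (d i) < K (d (i+1)) → 1 < ψ (d (i+1)) - ψ (d i)) ∧
           (K (d (i+1)) < K (d i) → -1 < ψ (d (i+1)) - ψ (d i))) :
    ∃ e : ↥s ≃ Fin s.card, Semiacyclic fun i j => R ((e.symm i : V)) ((e.symm j : V)) := by
  classical
  obtain ⟨e, he⟩ := exists_key_equiv s K hinj
  refine ⟨e, ?_⟩
  rintro m c hcyc hasc
  obtain ⟨hcinj, hR⟩ := hcyc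
  have hasc' : (univ.filter (fun i : Fin (m + 1) => c (i + 1) < c i)).card ≤
      (univ.filter (fun i : Fin (m + 1) => c i < c (i + 1))).card := hasc
  match m, c, hcinj, hR, hasc' with
  | 0, c, hcinj, hR, hasc' =>
    have h0 := hR 0
    rw [Subsingleton.elim ((0 : Fin 1) + 1) 0] at h0
    exact hirr _ h0
  | Nat.succ m, c, hcinj, hR, hasc' =>
    set d : Fin (m+2) → V := fun i => ((e.symm (c i) : ↥s) : V) with hd
    have hmem : ∀ i, d i ∈ s := fun i => (e.symm (c i)).2
    have hdinj : Function.Injective d := by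
      intro i j hij
      exact hcinj (e.symm.injective (Subtype.ext hij))
    have hRd : ∀ i, R (d i) (d (i+1)) := hR
    have hΔ := hedge m d hmem hdinj hRd
    have hK : ∀ i j, K (d i) < K (d j) ↔ c i < c j := by
      intro i j
      have := he (e.symm (c i)) (e.symm (c j))
      simpa using this
    have hne : ∀ i, c i ≠ c (i+1) := fun i h => fin_ne_add_one i (hcinj h)
    have hre : ∑ i : Fin (m+2), ψ (d (i+1)) = ∑ i : Fin (m+2), ψ (d i) :=
      Fintype.sum_equiv (Equiv.addRight 1) _ _ (fun i => rfl)
    have hsum : ∑ i : Fin (m+2), (ψ (d (i+1)) - ψ (d i)) = 0 := by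
      rw [Finset.sum_sub_distrib, hre, sub_self]
    have hlt : ∀ i ∈ (univ : Finset (Fin (m+2))),
        (if c i < c (i+1) then (1:ℝ) else 0) - (if c (i+1) < c i then (1:ℝ) else 0)
          < ψ (d (i+1)) - ψ (d i) := by
      intro i _
      rcases (hne i).lt_or_gt with h | h
      · rw [if_pos h, if_neg (asymm h)]
        have := (hΔ i).1 ((hK i (i+1)).2 h)
        linarith
      · rw [if_neg (asymm h), if_pos h]
        have := (hΔ i).2 ((hK (i+1) i).2 h)
        linarith
    have hslt : ∑ i : Fin (m+2),
        ((if c i < c (i+1) then (1:ℝ) else 0) - (if c (i+1) < c i then (1:ℝ) else 0))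
        < ∑ i : Fin (m+2), (ψ (d (i+1)) - ψ (d i)) :=
      Finset.sum_lt_sum_of_nonempty univ_nonempty hlt
    rw [hsum, Finset.sum_sub_distrib, Finset.sum_boole, Finset.sum_boole, sub_neg] at hslt
    have hcast : ((univ.filter (fun i : Fin (m+2) => c (i+1) < c i)).card : ℝ)
        ≤ ((univ.filter (fun i : Fin (m+2) => c i < c (i+1))).card : ℝ) := by
      exact_mod_cast hasc'
    exact absurd hcast (by push_neg; exact_mod_cast hslt)

lemma lex3_lt_iff (a₁ b₁ c₁ a₂ b₂ c₂ : ℝ) :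
    (toLex (a₁, toLex (b₁, c₁)) < toLex (a₂, toLex (b₂, c₂)))
    ↔ a₁ < a₂ ∨ (a₁ = a₂ ∧ (b₁ < b₂ ∨ (b₁ = b₂ ∧ c₁ < c₂))) := by
  rw [Prod.Lex.lt_iff]
  constructor
  · rintro (h | ⟨h1, h2⟩)
    · exact Or.inl h
    · exact Or.inr ⟨h1, Prod.Lex.lt_iff.1 h2⟩
  · rintro (h | ⟨h1, h2⟩)
    · exact Or.inl h
    · exact Or.inr ⟨h1, Prod.Lex.lt_iff.2 h2⟩

/-- If a tournament is the dominance graph of a system of coins, then its vertex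
set is the union of two sets on each of which the induced subtournament can be
numbered so as to become semiacyclic. -/
theorem stmt15 {V : Type*} [Fintype V] (R : V → V → Prop)
    (htour : IsTournament R)
    (a b x : V → ℝ) (hcoin : ∀ v, a v ≤ b v ∧ 0 < x v)
    (hrep : ∀ u v : V, u ≠ v →
      (Dominates (a u) (b u) (x u) (a v) (b v) (x v) ↔ R u v)) :
    ∃ V₁ V₂ : Finset V, (∀ v, v ∈ V₁ ∨ v ∈ V₂) ∧
      (∃ e : V₁ ≃ Fin V₁.card,
        Semiacyclic (fun i j => R ((e.symm i : V)) ((e.symm j : V)))) ∧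
      (∃ e : V₂ ≃ Fin V₂.card,
        Semiacyclic (fun i j => R ((e.symm i : V)) ((e.symm j : V)))) := by
  classical
  -- basic consequences of the tournament/representation hypotheses
  have hirr : ∀ v, ¬ R v v := htour.1
  have hkey_inj : ∀ (u v : V), a u = a v → b u = b v → x u = x v → u = v := by
    intro u v ha hb hx
    by_contra hne
    have hd1 : ¬ Dominates (a u) (b u) (x u) (a v) (b v) (x v) := by
      rw [ha, hb, hx]; exact lt_irrefl _
    have hd2 : ¬ Dominates (a v) (b v) (x v) (a u) (b u) (x u) := by
      rw [ha, hb, hx]; exact lt_irrefl _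
    have hr1 : ¬ R u v := fun h => hd1 ((hrep u v hne).mpr h)
    have hr2 : ¬ R v u := fun h => hd2 ((hrep v u (Ne.symm hne)).mpr h)
    exact hr1 ((htour.2 u v hne).mpr hr2)
  have hDomOf : ∀ {m : ℕ} (d : Fin (m+2) → V), Function.Injective d →
      (∀ i, R (d i) (d (i+1))) → ∀ i,
      Dominates (a (d i)) (b (d i)) (x (d i)) (a (d (i+1))) (b (d (i+1))) (x (d (i+1))) := by
    intro m d hdinj hRd i
    exact (hrep _ _ (fun h => fin_ne_add_one i (hdinj h))).mpr (hRd i)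
  refine ⟨univ.filter (fun v => x v ≤ 1), univ.filter (fun v => 1 < x v), ?_, ?_, ?_⟩
  · intro v
    rcases le_or_gt (x v) 1 with h | h
    · exact Or.inl (mem_filter.mpr ⟨mem_univ v, h⟩)
    · exact Or.inr (mem_filter.mpr ⟨mem_univ v, h⟩)
  · -- the class x ≤ 1, key (a, b, x), potential 1/x
    apply semi_of_key R hirr _ (fun v => toLex (a v, toLex (b v, x v))) (fun v => 1 / x v)
    · intro u hu v hv h
      rw [toLex.injective.eq_iff, Prod.mk.injEq, toLex.injective.eq_iff, Prod.mk.injEq] at h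
      exact hkey_inj u v h.1 h.2.1 h.2.2
    · intro m d hmem hdinj hRd i
      have hx1 : ∀ j, x (d j) ≤ 1 := fun j => (mem_filter.mp (hmem j)).2
      have hDom := hDomOf d hdinj hRd
      -- the first coordinate is cyclically constant
      have hdown : ∀ j : Fin (m+2), a (d (j+1)) ≤ a (d j) := by
        intro j
        by_contra hcon
        push_neg at hcon
        exact coinL1 (hcoin _).1 (hcoin _).2 (hcoin _).2 (hx1 j) hcon (hDom j)
      have hconst := cyc_const (fun j => a (d j)) hdown
      have haeq : ∀ j : Fin (m+2), a (d j) = a (d (j+1)) :=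
        fun j => (hconst j).trans (hconst (j+1)).symm
      -- all coins in a cycle are nondegenerate
      have hnd : ∀ j : Fin (m+2), a (d j) < b (d j) := by
        intro j
        rcases lt_or_eq_of_le (hcoin (d j)).1 with h | h
        · exact h
        · exact absurd (hDom j)
            (coinL2 (hcoin _).1 (hcoin _).2 (hcoin _).2 h (haeq j))
      -- the edge estimates
      rcases lt_trichotomy (b (d i)) (b (d (i+1))) with hb | hb | hb
      · have h3 := coinL3 (hcoin _).1 (hcoin _).2 (hcoin _).2 (haeq i) hb (hDom i)
        exact ⟨fun _ => by linarith, fun _ => by linarith⟩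
      · have h5 := coinL5 (hcoin _).1 (hcoin _).2 (hcoin _).2 (haeq i) hb (hDom i)
        constructor
        · intro hKlt
          exfalso
          rcases (lex3_lt_iff _ _ _ _ _ _).1 hKlt with h | ⟨_, h | ⟨_, h⟩⟩
          · exact absurd (haeq i) (ne_of_gt h).symm
          · exact absurd hb (ne_of_lt h)
          · linarith
        · intro _
          have : 1 / x (d i) < 1 / x (d (i+1)) :=
            one_div_lt_one_div_of_lt (hcoin _).2 h5
          linarith
      · have h4 := coinL4 (hcoin _).1 (hcoin _).2 (hcoin _).2 (haeq i) (hnd (i+1)) hb (hDom i)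
        constructor
        · intro hKlt
          exfalso
          rcases (lex3_lt_iff _ _ _ _ _ _).1 hKlt with h | ⟨_, h | ⟨h, _⟩⟩
          · exact absurd (haeq i) (ne_of_gt h).symm
          · exact absurd h (not_lt.mpr hb.le)
          · exact absurd h (ne_of_gt hb)
        · intro _
          exact h4
  · -- the class 1 < x, key (b, a, x), potential -x
    apply semi_of_key R hirr _ (fun v => toLex (b v, toLex (a v, x v))) (fun v => -(x v))
    · intro u hu v hv h
      rw [toLex.injective.eq_iff, Prod.mk.injEq, toLex.injective.eq_iff, Prod.mk.injEq] at h
      exact hkey_inj u v h.2.1 h.1 h.2.2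
    · intro m d hmem hdinj hRd i
      have hx1 : ∀ j, 1 < x (d j) := fun j => (mem_filter.mp (hmem j)).2
      have hDom := hDomOf d hdinj hRd
      -- the second coordinate is cyclically constant
      have hdown : ∀ j : Fin (m+2), b (d (j+1)) ≤ b (d j) := by
        intro j
        by_contra hcon
        push_neg at hcon
        exact coinM1 (hcoin _).1 (hcoin _).1 (hcoin _).2 (hcoin _).2 (hx1 (j+1)) hcon (hDom j)
      have hconst := cyc_const (fun j => b (d j)) hdown
      have hbeq : ∀ j : Fin (m+2), b (d j) = b (d (j+1)) :=
        fun j => (hconst j).trans (hconst (j+1)).symm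
      -- all coins in a cycle are nondegenerate
      have hnd' : ∀ j : Fin (m+2), a (d (j+1)) < b (d (j+1)) := by
        intro j
        rcases lt_or_eq_of_le (hcoin (d (j+1))).1 with h | h
        · exact h
        · exact absurd (hDom j)
            (coinM2 (hcoin _).1 (hcoin _).2 (hcoin _).2 (hbeq j) h)
      have hnd : ∀ j : Fin (m+2), a (d j) < b (d j) := by
        intro j
        have := hnd' (j - 1)
        rwa [sub_add_cancel] at this
      -- the edge estimates
      rcases lt_trichotomy (a (d i)) (a (d (i+1))) with ha | ha | ha
      · have h3 := coinM3 (hcoin _).1 (hcoin _).1 (hcoin _).2 (hcoin _).2 (hbeq i) ha (hDom i)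
        exact ⟨fun _ => by linarith, fun _ => by linarith⟩
      · have h5 := coinL5 (hcoin _).1 (hcoin _).2 (hcoin _).2 ha (hbeq i) (hDom i)
        constructor
        · intro hKlt
          exfalso
          rcases (lex3_lt_iff _ _ _ _ _ _).1 hKlt with h | ⟨_, h | ⟨_, h⟩⟩
          · exact absurd (hbeq i) (ne_of_gt h).symm
          · exact absurd ha (ne_of_lt h)
          · linarith
        · intro _
          linarith
      · have h4 := coinM4 (hcoin _).1 (hcoin _).2 (hcoin _).2 (hbeq i) ha (hnd i) (hDom i)
        constructor
        · intro hKlt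
          exfalso
          rcases (lex3_lt_iff _ _ _ _ _ _).1 hKlt with h | ⟨_, h | ⟨h, _⟩⟩
          · exact absurd (hbeq i) (ne_of_gt h).symm
          · exact absurd h (not_lt.mpr ha.le)
          · exact absurd h (ne_of_gt ha)
        · intro _
          linarith
end

section
/- Let T₁ and T₂ be tournaments on finite sets V₁ and V₂ such that neither T₁ nor T₂ can be made semiacyclic: for each k ∈ {1,2}, there is no bijection σ : V_k → {1,…,|V_k|} such that the tournament on {1,…,|V_k|} with σ(u)→σ(v) whenever u→v in T_k is semiacyclic. Then the direct product T₁×T₂ is not the dominance graph of any system of coins: there is no family of coins (c_w)_{w ∈ V₁×V₂} such that for all distinct w, w' ∈ V₁×V₂, coin c_w dominates coin c_{w'} if and only if w → w' in T₁×T₂. -/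
open Finset

/- ------------------- auxiliary material ------------------- -/

section Aux

lemma stmt16_winProb_eq {a b x a' b' x' : ℝ} (hx : 0 < x) (hx' : 0 < x') :
    winProb a b x a' b' x' =
      ((if a' < a then (1:ℝ) else 0) + x' * (if b' < a then 1 else 0)
        + x * (if a' < b then 1 else 0) + x * x' * (if b' < b then 1 else 0))
      / ((1 + x) * (1 + x')) := by
  have h1 : (1 + x) ≠ 0 := by positivity
  have h2 : (1 + x') ≠ 0 := by positivity
  unfold winProb
  generalize (if a' < a then (1:ℝ) else 0) = i1
  generalize (if b' < a then (1:ℝ) else 0) = i2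
  generalize (if a' < b then (1:ℝ) else 0) = i3
  generalize (if b' < b then (1:ℝ) else 0) = i4
  field_simp

lemma stmt16_dom_iff {a b x a' b' x' : ℝ} (hx : 0 < x) (hx' : 0 < x') :
    Dominates a b x a' b' x' ↔
      ((if a < a' then (1:ℝ) else 0) + x * (if b < a' then 1 else 0)
        + x' * (if a < b' then 1 else 0) + x' * x * (if b < b' then 1 else 0))
      < ((if a' < a then (1:ℝ) else 0) + x' * (if b' < a then 1 else 0)
        + x * (if a' < b then 1 else 0) + x * x' * (if b' < b then 1 else 0)) := by
  have h3 : (0:ℝ) < (1 + x) * (1 + x') := by positivity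
  rw [Dominates, stmt16_winProb_eq hx hx', stmt16_winProb_eq hx' hx,
    show (1 + x') * (1 + x) = (1 + x) * (1 + x') by ring,
    div_lt_div_iff_of_pos_right h3]

variable {a b x a' b' x' : ℝ}

/-- a dominating coin's top exceeds the dominated coin's bottom. -/
lemma stmt16_dom_bot_lt_top (ha : a ≤ b) (ha' : a' ≤ b') (hx : 0 < x) (hx' : 0 < x')
    (h : Dominates a b x a' b' x') : a' < b := by
  by_contra hc
  push_neg at hc
  rw [stmt16_dom_iff hx hx'] at h
  rw [if_neg (by linarith : ¬ a' < a), if_neg (by linarith : ¬ b' < a),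
      if_neg (by linarith : ¬ a' < b), if_neg (by linarith : ¬ b' < b)] at h
  have h1 : (0:ℝ) ≤ (if a < a' then (1:ℝ) else 0) := by positivity
  have h2 : (0:ℝ) ≤ (if b < a' then (1:ℝ) else 0) := by positivity
  have h3 : (0:ℝ) ≤ (if a < b' then (1:ℝ) else 0) := by positivity
  have h4 : (0:ℝ) ≤ (if b < b' then (1:ℝ) else 0) := by positivity
  nlinarith [mul_nonneg hx.le h2, mul_nonneg hx'.le h3,
    mul_nonneg (mul_nonneg hx'.le hx.le) h4]

/-- nested, outer dominates inner: forces x > 1 -/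
lemma stmt16_dom_nest_out (ha : a ≤ b) (ha' : a' ≤ b') (hx : 0 < x) (hx' : 0 < x')
    (h1 : a < a') (h2 : a' < b) (h3 : b' < b)
    (h : Dominates a b x a' b' x') : 1 < x := by
  rw [stmt16_dom_iff hx hx'] at h
  rw [if_pos h1, if_neg (by linarith : ¬ b < a'), if_pos (by linarith : a < b'),
      if_neg (by linarith : ¬ b < b'), if_neg (by linarith : ¬ a' < a),
      if_neg (by linarith : ¬ b' < a), if_pos h2, if_pos h3] at h
  nlinarith

/-- nested, inner dominates outer: forces x' < 1 -/
lemma stmt16_dom_nest_in (ha : a ≤ b) (ha' : a' ≤ b') (hx : 0 < x) (hx' : 0 < x')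
    (h1 : a' < a) (h2 : b < b')
    (h : Dominates a b x a' b' x') : x' < 1 := by
  rw [stmt16_dom_iff hx hx'] at h
  rw [if_neg (by linarith : ¬ a < a'), if_neg (by linarith : ¬ b < a'),
      if_pos (by linarith : a < b'), if_pos h2, if_pos h1,
      if_neg (by linarith : ¬ b' < a), if_pos (by linarith : a' < b),
      if_neg (by linarith : ¬ b' < b)] at h
  nlinarith

/-- crossing upward -/
lemma stmt16_dom_cross (ha : a ≤ b) (ha' : a' ≤ b') (hx : 0 < x) (hx' : 0 < x')
    (h1 : a < a') (h2 : a' < b) (h3 : b < b')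
    (h : Dominates a b x a' b' x') : 1 + x' + x * x' < x := by
  rw [stmt16_dom_iff hx hx'] at h
  rw [if_pos h1, if_neg (by linarith : ¬ b < a'), if_pos (by linarith : a < b'),
      if_pos h3, if_neg (by linarith : ¬ a' < a), if_neg (by linarith : ¬ b' < a),
      if_pos h2, if_neg (by linarith : ¬ b' < b)] at h
  nlinarith

/-- equal tops, wider dominates: x > 1 + x' -/
lemma stmt16_dom_beq_lt (ha : a ≤ b) (ha' : a' ≤ b') (hx : 0 < x) (hx' : 0 < x')
    (h0 : a < a') (h1 : a' < b') (h2 : b' = b)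
    (h : Dominates a b x a' b' x') : 1 + x' < x := by
  rw [stmt16_dom_iff hx hx'] at h
  rw [if_pos h0, if_neg (by linarith : ¬ b < a'), if_pos (by linarith : a < b'),
      if_neg (by linarith : ¬ b < b'), if_neg (by linarith : ¬ a' < a),
      if_neg (by linarith : ¬ b' < a), if_pos (by linarith : a' < b),
      if_neg (by linarith : ¬ b' < b)] at h
  nlinarith

/-- equal tops, narrower dominates wider: x' < 1 + x -/
lemma stmt16_dom_beq_gt (ha : a ≤ b) (ha' : a' ≤ b') (hx : 0 < x) (hx' : 0 < x')
    (h0 : a' < a) (h1 : a < b) (h2 : b' = b)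
    (h : Dominates a b x a' b' x') : x' < 1 + x := by
  rw [stmt16_dom_iff hx hx'] at h
  rw [if_neg (by linarith : ¬ a < a'), if_neg (by linarith : ¬ b < a'),
      if_pos (by linarith : a < b'), if_neg (by linarith : ¬ b < b'),
      if_pos h0, if_neg (by linarith : ¬ b' < a), if_pos (by linarith : a' < b),
      if_neg (by linarith : ¬ b' < b)] at h
  nlinarith

/-- same interval: x' < x -/
lemma stmt16_dom_same (ha : a ≤ b) (ha' : a' ≤ b') (hx : 0 < x) (hx' : 0 < x')
    (h0 : a = a') (h1 : b' = b) (h2 : a < b)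
    (h : Dominates a b x a' b' x') : x' < x := by
  rw [stmt16_dom_iff hx hx'] at h
  rw [if_neg (by linarith : ¬ a < a'), if_neg (by linarith : ¬ b < a'),
      if_pos (by linarith : a < b'), if_neg (by linarith : ¬ b < b'),
      if_neg (by linarith : ¬ a' < a), if_neg (by linarith : ¬ b' < a),
      if_pos (by linarith : a' < b), if_neg (by linarith : ¬ b' < b)] at h
  nlinarith

/-- equal bottoms, shorter dominates taller: x' (1+x) < x -/
lemma stmt16_dom_aeq_lt (ha : a ≤ b) (ha' : a' ≤ b') (hx : 0 < x) (hx' : 0 < x')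
    (h0 : a = a') (h1 : a < b) (h2 : b < b')
    (h : Dominates a b x a' b' x') : x' * (1 + x) < x := by
  rw [stmt16_dom_iff hx hx'] at h
  rw [if_neg (by linarith : ¬ a < a'), if_neg (by linarith : ¬ b < a'),
      if_pos (by linarith : a < b'), if_pos h2,
      if_neg (by linarith : ¬ a' < a), if_neg (by linarith : ¬ b' < a),
      if_pos (by linarith : a' < b), if_neg (by linarith : ¬ b' < b)] at h
  nlinarith

/-- equal bottoms, taller dominates shorter: x' < x (1+x') -/
lemma stmt16_dom_aeq_gt (ha : a ≤ b) (ha' : a' ≤ b') (hx : 0 < x) (hx' : 0 < x')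
    (h0 : a = a') (h1 : a' < b') (h2 : b' < b)
    (h : Dominates a b x a' b' x') : x' < x * (1 + x') := by
  rw [stmt16_dom_iff hx hx'] at h
  rw [if_neg (by linarith : ¬ a < a'), if_neg (by linarith : ¬ b < a'),
      if_pos (by linarith : a < b'), if_neg (by linarith : ¬ b < b'),
      if_neg (by linarith : ¬ a' < a), if_neg (by linarith : ¬ b' < a),
      if_pos (by linarith : a' < b), if_pos h2] at h
  nlinarith

end Aux

lemma stmt16_cycle_sum_zero {m : ℕ} (g : Fin (m+1) → ℝ) :
    ∑ i : Fin (m+1), (g (i+1) - g i) = 0 := by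
  rw [Finset.sum_sub_distrib]
  have : ∑ i : Fin (m+1), g (i+1) = ∑ i : Fin (m+1), g i :=
    Fintype.sum_equiv (Equiv.addRight (1 : Fin (m+1))) _ _ (fun i => rfl)
  rw [this, sub_self]

lemma stmt16_engine {m : ℕ} (g : Fin (m+1) → ℝ) (P : Fin (m+1) → Prop) [DecidablePred P]
    (h : ∀ i, (if P i then (1:ℝ) else -1) < g (i+1) - g i) :
    (univ.filter (fun i => P i)).card < (univ.filter (fun i => ¬ P i)).card := by
  have h1 : ∑ i : Fin (m+1), (if P i then (1:ℝ) else -1) < 0 := by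
    rw [← stmt16_cycle_sum_zero g]
    exact Finset.sum_lt_sum_of_nonempty univ_nonempty (fun i _ => h i)
  rw [Finset.sum_ite, Finset.sum_const, Finset.sum_const] at h1
  have h2 : ((univ.filter (fun i => P i)).card : ℝ)
      < ((univ.filter (fun i => ¬ P i)).card : ℝ) := by
    simp only [nsmul_eq_mul, mul_one, mul_neg_one] at h1
    linarith
  exact_mod_cast h2

lemma stmt16_cycle_eq {m : ℕ} (g : Fin (m+1) → ℝ) (h : ∀ i, g (i+1) ≤ g i) :
    ∀ i, g (i+1) = g i := by
  have h0 := stmt16_cycle_sum_zero g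
  have hz := (Finset.sum_eq_zero_iff_of_nonpos (fun i _ => by
      have := h i; simp only [sub_nonpos]; linarith)).1 h0
  intro i
  have := hz i (mem_univ i)
  linarith [sub_eq_zero.1 this]

abbrev stmt16Key := ℝ ×ₗ (ℝ ×ₗ ℝ)
def stmt16mkKey (p q r : ℝ) : stmt16Key := toLex (p, toLex (q, r))

lemma stmt16mkKey_lt_iff {p q r p' q' r' : ℝ} :
    stmt16mkKey p q r < stmt16mkKey p' q' r' ↔
      p < p' ∨ (p = p' ∧ (q < q' ∨ (q = q' ∧ r < r'))) := by
  unfold stmt16mkKey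
  rw [Prod.Lex.lt_iff]
  simp only [Prod.Lex.lt_iff, ofLex_toLex]

lemma stmt16mkKey_inj {p q r p' q' r' : ℝ} (h : stmt16mkKey p q r = stmt16mkKey p' q' r') :
    p = p' ∧ q = q' ∧ r = r' := by
  have h1 : ((p, (q, r)) : ℝ × ℝ × ℝ) = (p', (q', r')) := h
  simp only [Prod.mk.injEq] at h1
  tauto

lemma stmt16_not_dom_self (a b x : ℝ) : ¬ Dominates a b x a b x :=
  lt_irrefl _

/-- If neither `T₁` nor `T₂` can be numbered so as to become semiacyclic, then
`T₁ × T₂` is not the dominance graph of any system of coins. -/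
theorem stmt16 {V₁ V₂ : Type*} [Fintype V₁] [Fintype V₂]
    (R₁ : V₁ → V₁ → Prop) (R₂ : V₂ → V₂ → Prop)
    (ht₁ : IsTournament R₁) (ht₂ : IsTournament R₂)
    (h₁ : ¬ ∃ e : V₁ ≃ Fin (Fintype.card V₁),
      Semiacyclic (fun i j => R₁ (e.symm i) (e.symm j)))
    (h₂ : ¬ ∃ e : V₂ ≃ Fin (Fintype.card V₂),
      Semiacyclic (fun i j => R₂ (e.symm i) (e.symm j))) :
    ¬ ∃ a b x : V₁ × V₂ → ℝ,
      (∀ w, a w ≤ b w ∧ 0 < x w) ∧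
      ∀ w w' : V₁ × V₂, w ≠ w' →
        (Dominates (a w) (b w) (x w) (a w') (b w') (x w') ↔
          TournProd R₁ R₂ w w') := by
  classical
  rintro ⟨a, b, x, hco, hdom⟩
  -- dispose of empty vertex sets
  rcases isEmpty_or_nonempty V₁ with hE₁ | hNE₁
  · exact h₁ ⟨Fintype.equivFin V₁, fun m c hc hasc =>
      isEmptyElim ((Fintype.equivFin V₁).symm (c 0))⟩
  rcases isEmpty_or_nonempty V₂ with hE₂ | hNE₂
  · exact h₂ ⟨Fintype.equivFin V₂, fun m c hc hasc =>
      isEmptyElim ((Fintype.equivFin V₂).symm (c 0))⟩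
  by_cases hP : ∀ u : V₁, ∃ v : V₂, 1 < x (u, v) ∧ a (u, v) < b (u, v)
  · -- CASE B : every fiber has a proper heavy coin; contradict h₁
    choose t ht1 ht2 using hP
    set T : V₁ → V₁ × V₂ := fun u => (u, t u) with hT
    set K : V₁ → stmt16Key := fun u => stmt16mkKey (b (T u)) (a (T u)) (x (T u)) with hK
    have hdomf : ∀ u u' : V₁, R₁ u u' →
        Dominates (a (T u)) (b (T u)) (x (T u)) (a (T u')) (b (T u')) (x (T u')) := by
      intro u u' hr
      have hne : u ≠ u' := by rintro rfl; exact (ht₁.1 u) hr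
      have hne2 : T u ≠ T u' := by
        intro hh; exact hne (congrArg Prod.fst hh)
      exact (hdom (T u) (T u') hne2).mpr (Or.inl hr)
    have hb : ∀ u u', R₁ u u' → b (T u') ≤ b (T u) := by
      intro u u' hr
      have hd := hdomf u u' hr
      by_contra hbc; push_neg at hbc
      rcases lt_trichotomy (a (T u)) (a (T u')) with h1 | h1 | h1
      · have h2 : a (T u') < b (T u) :=
          stmt16_dom_bot_lt_top (hco _).1 (hco _).1 (hco _).2 (hco _).2 hd
        have h3 := stmt16_dom_cross (hco _).1 (hco _).1 (hco _).2 (hco _).2 h1 h2 hbc hd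
        nlinarith [ht1 u', (hco (T u)).2, (hco (T u')).2]
      · have h3 := stmt16_dom_aeq_lt (hco _).1 (hco _).1 (hco _).2 (hco _).2 h1 (ht2 u) hbc hd
        nlinarith [ht1 u', (hco (T u)).2]
      · have h3 := stmt16_dom_nest_in (hco _).1 (hco _).1 (hco _).2 (hco _).2 h1 hbc hd
        linarith [ht1 u']
    have hKinj : Function.Injective K := by
      intro u u' he
      by_contra hne
      obtain ⟨e1, e2, e3⟩ := stmt16mkKey_inj he
      have : ∀ w w' : V₁, R₁ w w' → b (T w) = b (T w') → a (T w) = a (T w') →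
          x (T w) = x (T w') → False := by
        intro w w' hr eb ea ex
        have hd := hdomf w w' hr
        rw [ea, eb, ex] at hd
        exact stmt16_not_dom_self _ _ _ hd
      rcases (by
        by_cases hr : R₁ u' u
        · exact Or.inr hr
        · exact Or.inl ((ht₁.2 u u' hne).mpr hr) : R₁ u u' ∨ R₁ u' u) with hr | hr
      · exact this u u' hr e1 e2 e3
      · exact this u' u hr e1.symm e2.symm e3.symm
    letI : LinearOrder V₁ := LinearOrder.lift' K hKinj
    apply h₁
    refine ⟨(monoEquivOfFin V₁ rfl).toEquiv.symm, ?_⟩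
    intro m cF hc hasc
    obtain ⟨hcinj, hedge⟩ := hc
    set E := monoEquivOfFin V₁ rfl with hE
    set c : Fin (m+1) → V₁ := fun i => E (cF i) with hc_def
    have hedge' : ∀ i, R₁ (c i) (c (i+1)) := fun i => hedge i
    -- m = 0 impossible
    rcases m with _ | m
    · have h0 := hedge' 0
      have : (0 + 1 : Fin 1) = 0 := Subsingleton.elim _ _
      rw [this] at h0
      exact ht₁.1 _ h0
    -- m ≥ 1
    have hne1 : ∀ i : Fin (m+2), i ≠ i + 1 := by
      intro i h
      have h2 : (0 : Fin (m+2)) = 1 := by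
        have := add_left_cancel (a := i) (b := (0 : Fin (m+2))) (c := 1)
        exact this (by rw [add_zero]; exact h)
      have h3 := congrArg Fin.val h2
      simp [Fin.val_zero, Fin.val_one] at h3
    have hd : ∀ i : Fin (m+2),
        Dominates (a (T (c i))) (b (T (c i))) (x (T (c i)))
          (a (T (c (i+1)))) (b (T (c (i+1)))) (x (T (c (i+1)))) :=
      fun i => hdomf _ _ (hedge' i)
    have hbe : ∀ i : Fin (m+2), b (T (c (i+1))) ≤ b (T (c i)) :=
      fun i => hb _ _ (hedge' i)
    have hbeq : ∀ i : Fin (m+2), b (T (c (i+1))) = b (T (c i)) :=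
      stmt16_cycle_eq (fun i => b (T (c i))) hbe
    set P : Fin (m+2) → Prop := fun i => cF i < cF (i+1) with hP_def
    have hPiff : ∀ i, P i ↔ K (c i) < K (c (i+1)) := by
      intro i
      constructor
      · intro h; exact (E.lt_iff_lt.mpr h : E (cF i) < E (cF (i+1)))
      · intro h; exact E.lt_iff_lt.mp h
    have hKey : ∀ i, (if P i then (1:ℝ) else -1)
        < (- x (T (c (i+1)))) - (- x (T (c i))) := by
      intro i
      by_cases hPi : P i
      · rw [if_pos hPi]
        have hlt := (hPiff i).1 hPi
        rw [hK] at hlt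
        rcases stmt16mkKey_lt_iff.1 hlt with hcase | ⟨heb, hcase⟩
        · exact absurd (hbeq i) (by intro hh; rw [hh] at hcase; exact lt_irrefl _ hcase)
        · rcases hcase with hlt2 | ⟨hea, hlt3⟩
          · have := stmt16_dom_beq_lt (hco _).1 (hco _).1 (hco _).2 (hco _).2
              hlt2 (ht2 (c (i+1))) (hbeq i) (hd i)
            linarith
          · have := stmt16_dom_same (hco _).1 (hco _).1 (hco _).2 (hco _).2
              hea (hbeq i) (ht2 (c i)) (hd i)
            linarith
      · rw [if_neg hPi]
        have hneq : cF (i+1) ≠ cF i := fun hh => (hne1 i) (hcinj hh).symm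
        have hlt0 : cF (i+1) < cF i := by
          rcases hneq.lt_or_gt with h | h
          · exact h
          · exact absurd h hPi
        have hlt : K (c (i+1)) < K (c i) :=
          (E.lt_iff_lt.mpr hlt0 : E (cF (i+1)) < E (cF i))
        rw [hK] at hlt
        rcases stmt16mkKey_lt_iff.1 hlt with hcase | ⟨heb, hcase⟩
        · exact absurd (hbeq i) (by intro hh; rw [hh] at hcase; exact lt_irrefl _ hcase)
        · rcases hcase with hlt2 | ⟨hea, hlt3⟩
          · have := stmt16_dom_beq_gt (hco _).1 (hco _).1 (hco _).2 (hco _).2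
              hlt2 (ht2 (c i)) (hbeq i) (hd i)
            linarith
          · linarith
    have hcard := stmt16_engine (fun i => - x (T (c i))) P hKey
    rw [IsAscendingCycle] at hasc
    refine absurd hasc (not_le.mpr ?_)
    calc (univ.filter (fun i : Fin (m+2) => cF i < cF (i+1))).card
        = (univ.filter (fun i => P i)).card := by
          apply congrArg Finset.card
          apply Finset.filter_congr
          intro i _
          simp only [hP_def]
      _ < (univ.filter (fun i => ¬ P i)).card := hcard
      _ = (univ.filter (fun i : Fin (m+2) => cF (i+1) < cF i)).card := by
          apply congrArg Finset.card
          apply Finset.filter_congr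
          intro i _
          constructor
          · intro hh
            have hneq : cF (i+1) ≠ cF i := fun h2 => (hne1 i) (hcinj h2).symm
            rcases hneq.lt_or_gt with h | h
            · exact h
            · exact absurd h hh
          · intro hh hh2
            exact absurd (lt_trans hh2 hh) (lt_irrefl _)
  · -- CASE A : some fiber has no proper heavy coin; contradict h₂
    push_neg at hP
    obtain ⟨u₀, hu₀⟩ := hP
    set T : V₂ → V₁ × V₂ := fun v => (u₀, v) with hT
    set K : V₂ → stmt16Key := fun v => stmt16mkKey (a (T v)) (b (T v)) (x (T v)) with hK
    have hdomf : ∀ v v' : V₂, R₂ v v' →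
        Dominates (a (T v)) (b (T v)) (x (T v)) (a (T v')) (b (T v')) (x (T v')) := by
      intro v v' hr
      have hne : v ≠ v' := by rintro rfl; exact (ht₂.1 v) hr
      have hne2 : T v ≠ T v' := by
        intro hh; exact hne (congrArg Prod.snd hh)
      exact (hdom (T v) (T v') hne2).mpr (Or.inr ⟨rfl, hr⟩)
    have hKinj : Function.Injective K := by
      intro v v' he
      by_contra hne
      obtain ⟨e1, e2, e3⟩ := stmt16mkKey_inj he
      have key : ∀ w w' : V₂, R₂ w w' → a (T w) = a (T w') → b (T w) = b (T w') →
          x (T w) = x (T w') → False := by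
        intro w w' hr ea eb ex
        have hd := hdomf w w' hr
        rw [ea, eb, ex] at hd
        exact stmt16_not_dom_self _ _ _ hd
      rcases (by
        by_cases hr : R₂ v' v
        · exact Or.inr hr
        · exact Or.inl ((ht₂.2 v v' hne).mpr hr) : R₂ v v' ∨ R₂ v' v) with hr | hr
      · exact key v v' hr e1 e2 e3
      · exact key v' v hr e1.symm e2.symm e3.symm
    letI : LinearOrder V₂ := LinearOrder.lift' K hKinj
    apply h₂
    refine ⟨(monoEquivOfFin V₂ rfl).toEquiv.symm, ?_⟩
    intro m cF hc hasc
    obtain ⟨hcinj, hedge⟩ := hc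
    set E := monoEquivOfFin V₂ rfl with hE
    set c : Fin (m+1) → V₂ := fun i => E (cF i) with hc_def
    have hedge' : ∀ i, R₂ (c i) (c (i+1)) := fun i => hedge i
    rcases m with _ | m
    · have h0 := hedge' 0
      have : (0 + 1 : Fin 1) = 0 := Subsingleton.elim _ _
      rw [this] at h0
      exact ht₂.1 _ h0
    have hne1 : ∀ i : Fin (m+2), i ≠ i + 1 := by
      intro i h
      have h2 : (0 : Fin (m+2)) = 1 := by
        have := add_left_cancel (a := i) (b := (0 : Fin (m+2))) (c := 1)
        exact this (by rw [add_zero]; exact h)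
      have h3 := congrArg Fin.val h2
      simp [Fin.val_zero, Fin.val_one] at h3
    have hd : ∀ i : Fin (m+2),
        Dominates (a (T (c i))) (b (T (c i))) (x (T (c i)))
          (a (T (c (i+1)))) (b (T (c (i+1)))) (x (T (c (i+1)))) :=
      fun i => hdomf _ _ (hedge' i)
    set P : Fin (m+2) → Prop := fun i => cF i < cF (i+1) with hP_def
    have hPiff : ∀ i, P i ↔ K (c i) < K (c (i+1)) := by
      intro i
      constructor
      · intro h; exact (E.lt_iff_lt.mpr h : E (cF i) < E (cF (i+1)))
      · intro h; exact E.lt_iff_lt.mp h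
    have hdesc : ∀ i, ¬ P i → K (c (i+1)) < K (c i) := by
      intro i hPi
      have hneq : cF (i+1) ≠ cF i := fun hh => (hne1 i) (hcinj hh).symm
      have hlt0 : cF (i+1) < cF i := by
        rcases hneq.lt_or_gt with h | h
        · exact h
        · exact absurd h hPi
      exact (E.lt_iff_lt.mpr hlt0 : E (cF (i+1)) < E (cF i))
    -- step 1 : a is constant along the cycle
    have hae : ∀ i : Fin (m+2), a (T (c (i+1))) ≤ a (T (c i)) := by
      intro i
      by_cases hPi : P i
      · -- ascent : show a equal
        have hlt := (hPiff i).1 hPi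
        rw [hK] at hlt
        rcases stmt16mkKey_lt_iff.1 hlt with hcase | ⟨hea, _⟩
        · -- a (c i) < a (c (i+1)) : impossible
          exfalso
          have htop : a (T (c (i+1))) < b (T (c i)) :=
            stmt16_dom_bot_lt_top (hco _).1 (hco _).1 (hco _).2 (hco _).2 (hd i)
          have hproper : a (T (c i)) < b (T (c i)) := lt_trans hcase htop
          have hxle : x (T (c i)) ≤ 1 := by
            by_contra hxc; push_neg at hxc
            exact absurd (hu₀ (c i) hxc) (not_le.mpr hproper)
          rcases lt_trichotomy (b (T (c i))) (b (T (c (i+1)))) with hb1 | hb1 | hb1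
          · have := stmt16_dom_cross (hco _).1 (hco _).1 (hco _).2 (hco _).2
              hcase htop hb1 (hd i)
            nlinarith [(hco (T (c (i+1)))).2, (hco (T (c i))).2]
          · have := stmt16_dom_beq_lt (hco _).1 (hco _).1 (hco _).2 (hco _).2
              hcase (by rw [hb1] at htop; exact htop) hb1.symm (hd i)
            nlinarith [(hco (T (c (i+1)))).2]
          · have := stmt16_dom_nest_out (hco _).1 (hco _).1 (hco _).2 (hco _).2
              hcase htop hb1 (hd i)
            linarith
        · linarith [hea.le]
      · have hlt := hdesc i hPi
        rw [hK] at hlt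
        rcases stmt16mkKey_lt_iff.1 hlt with hcase | ⟨hea, _⟩
        · exact hcase.le
        · linarith [hea.le]
    have haeq : ∀ i : Fin (m+2), a (T (c (i+1))) = a (T (c i)) :=
      stmt16_cycle_eq (fun i => a (T (c i))) hae
    -- step 2 : all cycle coins are proper
    have hproper : ∀ i : Fin (m+2), a (T (c i)) < b (T (c i)) := by
      intro i
      have htop : a (T (c (i+1))) < b (T (c i)) :=
        stmt16_dom_bot_lt_top (hco _).1 (hco _).1 (hco _).2 (hco _).2 (hd i)
      rw [haeq i] at htop
      exact htop
    -- step 3 : engine with g = 1/x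
    have hKey : ∀ i : Fin (m+2), (if P i then (1:ℝ) else -1)
        < (1 / x (T (c (i+1)))) - (1 / x (T (c i))) := by
      intro i
      have hx1 : (0:ℝ) < x (T (c i)) := (hco _).2
      have hx2 : (0:ℝ) < x (T (c (i+1))) := (hco _).2
      have hden : (0:ℝ) < x (T (c (i+1))) * x (T (c i)) := by positivity
      rw [div_sub_div _ _ (ne_of_gt hx2) (ne_of_gt hx1), one_mul, mul_one,
        lt_div_iff₀ hden]
      by_cases hPi : P i
      · rw [if_pos hPi]
        have hlt := (hPiff i).1 hPi
        rw [hK] at hlt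
        rcases stmt16mkKey_lt_iff.1 hlt with hcase | ⟨hea, hcase⟩
        · exact absurd (haeq i) (by intro hh; rw [hh] at hcase; exact lt_irrefl _ hcase)
        · rcases hcase with hb1 | ⟨hb1, hx3⟩
          · have hq := stmt16_dom_aeq_lt (hco _).1 (hco _).1 (hco _).2 (hco _).2
              hea (hproper i) hb1 (hd i)
            nlinarith
          · have := stmt16_dom_same (hco _).1 (hco _).1 (hco _).2 (hco _).2
              hea hb1.symm (hproper i) (hd i)
            nlinarith
      · rw [if_neg hPi]
        have hlt := hdesc i hPi
        rw [hK] at hlt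
        rcases stmt16mkKey_lt_iff.1 hlt with hcase | ⟨hea, hcase⟩
        · exact absurd (haeq i) (by intro hh; rw [hh] at hcase; exact lt_irrefl _ hcase)
        · rcases hcase with hb1 | ⟨hb1, hx3⟩
          · have hq := stmt16_dom_aeq_gt (hco _).1 (hco _).1 (hco _).2 (hco _).2
              (haeq i).symm (hproper (i+1)) hb1 (hd i)
            nlinarith
          · nlinarith
    have hcard := stmt16_engine (fun i => 1 / x (T (c i))) P hKey
    rw [IsAscendingCycle] at hasc
    refine absurd hasc (not_le.mpr ?_)
    calc (univ.filter (fun i : Fin (m+2) => cF i < cF (i+1))).card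
        = (univ.filter (fun i => P i)).card := by
          apply congrArg Finset.card
          apply Finset.filter_congr
          intro i _
          simp only [hP_def]
      _ < (univ.filter (fun i => ¬ P i)).card := hcard
      _ = (univ.filter (fun i : Fin (m+2) => cF (i+1) < cF i)).card := by
          apply congrArg Finset.card
          apply Finset.filter_congr
          intro i _
          constructor
          · intro hh
            have hneq : cF (i+1) ≠ cF i := fun h2 => (hne1 i) (hcinj h2).symm
            rcases hneq.lt_or_gt with h | h
            · exact h
            · exact absurd h hh
          · intro hh hh2
            exact absurd (lt_trans hh2 hh) (lt_irrefl _)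
end
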